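/- arXiv:1409.3113 — 6 statements merged into one kernel-verified Lean document; each statement's English description precedes it below -/
import Mathlib

section
/- For θ > 0 and λ ∈ (0,1), the sequence p_{SU}(n) = (1-λ)(θ+λn)^n/n! · e^{-(θ+λn)}, n ∈ ℕ₀, defines a probability distribution: ∑_{n=0}^∞ (1-λ)(θ+λn)^n/n! · e^{-(θ+λn)} = 1. -/
open Finset Real Filter

noncomputable def cB (a : ℝ) : ℕ → ℝ
  | 0 => 1
  | (k+1) => a * (a + (k+1) : ℝ)^k


lemma chooseid (n k : ℕ) : (n+1) * n.choose k = (n+1).choose k * (n+1-k) := by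
  rw [← Nat.choose_succ_right_eq]
  exact Nat.add_one_mul_choose_eq n k

lemma cBpow (a : ℝ) (n k : ℕ) (hk : k ≤ n+1) :
    cB a k * (a + k)^(n+1-k) = a * (a + k)^n := by
  match k with
  | 0 => simp [cB, pow_succ']
  | (k+1) =>
    show a * (a + (k+1):ℝ)^k * (a + (k+1:ℕ))^(n+1-(k+1)) = _
    have : ((k+1 : ℕ) : ℝ) = (k:ℝ)+1 := by push_cast; ring
    rw [this, mul_assoc, ← pow_add]
    congr 2
    omega

/-- finite differences: alternating binomial sum kills low-degree powers -/
lemma FD : ∀ N j : ℕ, j < N →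
    ∑ k ∈ range (N+1), (-1:ℝ)^k * (N.choose k : ℝ) * (k:ℝ)^j = 0 := by
  intro N
  induction N with
  | zero => intro j h; omega
  | succ N ih =>
    intro j hj
    match j with
    | 0 =>
      have h := Int.alternating_sum_range_choose (n := N+1)
      rw [if_neg (Nat.succ_ne_zero N)] at h
      have h2 : ((∑ i ∈ range (N + 1 + 1), (-1:ℤ) ^ i * ((N+1).choose i) : ℤ) : ℝ) = 0 := by
        rw [h]; norm_num
      push_cast at h2
      simpa [pow_zero] using h2
    | j+1 =>
      rw [Finset.sum_range_succ']
      have h0 : (-1:ℝ)^0 * ((N+1).choose 0 : ℝ) * ((0:ℕ):ℝ)^(j+1) = 0 := by simp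
      rw [h0, add_zero]
      have hterm : ∀ m ∈ range (N+1),
          (-1:ℝ)^(m+1) * ((N+1).choose (m+1) : ℝ) * ((m+1:ℕ):ℝ)^(j+1)
          = ∑ i ∈ range (j+1), (-(N+1:ℝ)) * (j.choose i : ℝ) *
              ((-1:ℝ)^m * (N.choose m : ℝ) * (m:ℝ)^i) := by
        intro m _
        have hch : (((N+1).choose (m+1) : ℕ) : ℝ) * ((m:ℝ)+1) = (N+1 : ℝ) * (N.choose m : ℝ) := by
          have h3 : (N+1) * N.choose m = (N+1).choose (m+1) * (m+1) := Nat.add_one_mul_choose_eq N m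
          have h4 : (((N+1) * N.choose m : ℕ) : ℝ) = (((N+1).choose (m+1) * (m+1) : ℕ) : ℝ) :=
            congrArg _ h3
          push_cast at h4
          linarith
        have hbin : ((m:ℝ)+1)^j = ∑ i ∈ range (j+1), (j.choose i : ℝ) * (m:ℝ)^i := by
          rw [add_pow]
          exact Finset.sum_congr rfl fun i _ => by ring
        have : (-1:ℝ)^(m+1) * ((N+1).choose (m+1) : ℝ) * ((m+1:ℕ):ℝ)^(j+1)
            = (-1:ℝ)^m * (-1) * ((((N+1).choose (m+1):ℕ):ℝ) * ((m:ℝ)+1)) * ((m:ℝ)+1)^j := by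
          push_cast; ring
        rw [this, hch, hbin, Finset.mul_sum]
        exact Finset.sum_congr rfl fun i _ => by ring
      rw [Finset.sum_congr rfl hterm, Finset.sum_comm]
      apply Finset.sum_eq_zero
      intro i hi
      rw [← Finset.mul_sum, ih i (by simp at hi; omega), mul_zero]

lemma abel2 : ∀ n : ℕ, ∀ a b : ℝ,
    ∑ k ∈ range (n+1), (n.choose k : ℝ) * cB a k * (b + ((n-k:ℕ):ℝ))^(n-k)
      = (a+b+n)^n := by
  intro n
  induction n with
  | zero => intro a b; simp [cB]
  | succ n ih =>
    intro a b
    set f : ℝ → ℝ := fun b =>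
      ∑ k ∈ range (n+2), ((n+1).choose k : ℝ) * cB a k * (b + ((n+1-k:ℕ):ℝ))^(n+1-k) with hf
    set g : ℝ → ℝ := fun b => (a+b+((n+1:ℕ):ℝ))^(n+1) with hg
    -- derivative of f
    have hdf : ∀ b : ℝ, HasDerivAt f
        (∑ k ∈ range (n+2), ((n+1).choose k : ℝ) * cB a k *
          (((n+1-k:ℕ):ℝ) * (b + ((n+1-k:ℕ):ℝ))^(n+1-k-1))) b := by
      intro b
      apply HasDerivAt.fun_sum
      intro k _
      have h1 : HasDerivAt (fun b : ℝ => (b + ((n+1-k:ℕ):ℝ))^(n+1-k))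
          (((n+1-k:ℕ):ℝ) * (b + ((n+1-k:ℕ):ℝ))^(n+1-k-1)) b := by
        have := ((hasDerivAt_id b).add_const (((n+1-k:ℕ):ℝ))).fun_pow (n+1-k)
        simpa using this
      simpa [mul_assoc] using h1.const_mul (((n+1).choose k : ℝ) * cB a k)
    -- the derivative equals (n+1) * (a + (b+1) + n)^n
    have hds : ∀ b : ℝ, (∑ k ∈ range (n+2), ((n+1).choose k : ℝ) * cB a k *
          (((n+1-k:ℕ):ℝ) * (b + ((n+1-k:ℕ):ℝ))^(n+1-k-1)))
        = ((n:ℝ)+1) * (a+(b+1)+(n:ℝ))^n := by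
      intro b
      rw [Finset.sum_range_succ]
      have hlast : ((n+1).choose (n+1) : ℝ) * cB a (n+1) *
          (((n+1-(n+1):ℕ):ℝ) * (b + ((n+1-(n+1):ℕ):ℝ))^(n+1-(n+1)-1)) = 0 := by
        simp
      rw [hlast, add_zero]
      have hterm : ∀ k ∈ range (n+1), ((n+1).choose k : ℝ) * cB a k *
          (((n+1-k:ℕ):ℝ) * (b + ((n+1-k:ℕ):ℝ))^(n+1-k-1))
          = ((n:ℝ)+1) * ((n.choose k : ℝ) * cB a k * ((b+1) + ((n-k:ℕ):ℝ))^(n-k)) := by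
        intro k hk
        have hk' : k ≤ n := by simp at hk; omega
        have e1 : n+1-k-1 = n-k := by omega
        have e2 : ((n+1-k:ℕ):ℝ) = ((n-k:ℕ):ℝ) + 1 := by
          have : n+1-k = (n-k)+1 := by omega
          rw [this]; push_cast; ring
        have e3 : (((n+1).choose k : ℕ):ℝ) * ((n+1-k:ℕ):ℝ) = ((n:ℝ)+1) * (n.choose k : ℝ) := by
          have h4 : (((n+1) * n.choose k : ℕ):ℝ) = (((n+1).choose k * (n+1-k) : ℕ):ℝ) :=
            congrArg _ (chooseid n k)
          push_cast at h4
          linarith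
        rw [e1]
        calc ((n+1).choose k : ℝ) * cB a k * (((n+1-k:ℕ):ℝ) * (b + ((n+1-k:ℕ):ℝ))^(n-k))
            = ((((n+1).choose k : ℕ):ℝ) * ((n+1-k:ℕ):ℝ)) * cB a k
              * ((b + ((n+1-k:ℕ):ℝ))^(n-k)) := by ring
          _ = _ := by rw [e3, e2]; ring_nf
      rw [Finset.sum_congr rfl hterm, ← Finset.mul_sum, ih a (b+1)]
    -- derivative of g
    have hdg : ∀ b : ℝ, HasDerivAt g (((n:ℝ)+1) * (a+(b+1)+(n:ℝ))^n) b := by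
      intro b
      have h1 : HasDerivAt (fun b : ℝ => (a+b+((n+1:ℕ):ℝ))^(n+1))
          ((((n+1:ℕ)):ℝ) * (a+b+((n+1:ℕ):ℝ))^(n+1-1) * 1) b := by
        exact (((hasDerivAt_id b).const_add a).add_const (((n+1:ℕ)):ℝ)).pow (n+1)
      have e : (((n+1:ℕ)):ℝ) * (a+b+((n+1:ℕ):ℝ))^(n+1-1) * 1
          = ((n:ℝ)+1) * (a+(b+1)+(n:ℝ))^n := by
        push_cast
        ring_nf
      rw [e] at h1
      exact h1
    -- f - g is constant
    have hconst : ∀ b₁ b₂ : ℝ, f b₁ - g b₁ = f b₂ - g b₂ := by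
      intro b₁ b₂
      have hd : ∀ x : ℝ, HasDerivAt (fun y => f y - g y) 0 x := by
        intro x
        have := (hdf x).sub (hdg x)
        rwa [hds x, sub_self] at this
      exact is_const_of_deriv_eq_zero (fun x => (hd x).differentiableAt)
        (fun x => (hd x).deriv) b₁ b₂
    -- evaluate at b₀
    have hb0 : f (-(a + ((n+1:ℕ):ℝ))) - g (-(a + ((n+1:ℕ):ℝ))) = 0 := by
      have hgz : g (-(a + ((n+1:ℕ):ℝ))) = 0 := by
        simp only [hg]
        rw [show a + -(a + ((n+1:ℕ):ℝ)) + ((n+1:ℕ):ℝ) = 0 by ring]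
        exact zero_pow (Nat.succ_ne_zero n)
      have hfz : f (-(a + ((n+1:ℕ):ℝ))) = 0 := by
        simp only [hf]
        have hterm : ∀ k ∈ range (n+2), ((n+1).choose k : ℝ) * cB a k *
            ((-(a + ((n+1:ℕ):ℝ))) + ((n+1-k:ℕ):ℝ))^(n+1-k)
            = a * (-1:ℝ)^(n+1) * ∑ i ∈ range (n+1),
                ((n.choose i : ℝ) * a^i) * ((-1:ℝ)^k * ((n+1).choose k : ℝ) * (k:ℝ)^(n-i)) := by
          intro k hk
          have hk' : k ≤ n+1 := by simp at hk; omega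
          have e2 : ((n+1-k:ℕ):ℝ) = ((n+1:ℕ):ℝ) - (k:ℝ) := by
            push_cast [Nat.cast_sub hk']; ring
          have e4 : (-(a + ((n+1:ℕ):ℝ))) + ((n+1-k:ℕ):ℝ) = -(a + k) := by rw [e2]; ring
          rw [e4]
          have e5 : (-(a+(k:ℝ)))^(n+1-k) = (-1:ℝ)^(n+1-k) * (a+k)^(n+1-k) := by
            rw [neg_pow]
          have e6 : (-1:ℝ)^(n+1-k) = (-1:ℝ)^(n+1) * (-1:ℝ)^k := by
            have h7 : (-1:ℝ)^(n+1-k) * (-1:ℝ)^k = (-1:ℝ)^(n+1) := by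
              rw [← pow_add, Nat.sub_add_cancel hk']
            have h8 : (-1:ℝ)^k * (-1:ℝ)^k = 1 := by
              rw [← pow_add, ← two_mul, pow_mul]; norm_num
            calc (-1:ℝ)^(n+1-k) = (-1:ℝ)^(n+1-k) * ((-1:ℝ)^k * (-1:ℝ)^k) := by rw [h8, mul_one]
              _ = ((-1:ℝ)^(n+1-k) * (-1:ℝ)^k) * (-1:ℝ)^k := by ring
              _ = (-1:ℝ)^(n+1) * (-1:ℝ)^k := by rw [h7]
          have e7 : (a + (k:ℝ))^n = ∑ i ∈ range (n+1), a^i * (k:ℝ)^(n-i) * (n.choose i : ℝ) :=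
            add_pow a (k:ℝ) n
          calc ((n+1).choose k : ℝ) * cB a k * ((-(a+(k:ℝ)))^(n+1-k))
              = ((n+1).choose k : ℝ) * ((-1:ℝ)^(n+1) * (-1:ℝ)^k) * (cB a k * (a+k)^(n+1-k)) := by
                rw [e5, e6]; ring
            _ = ((n+1).choose k : ℝ) * ((-1:ℝ)^(n+1) * (-1:ℝ)^k) * (a * (a+k)^n) := by
                rw [cBpow a n k hk']
            _ = a * (-1:ℝ)^(n+1) * ((-1:ℝ)^k * ((n+1).choose k : ℝ) * (a+(k:ℝ))^n) := by ring
            _ = _ := by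
                simp only [e7, Finset.mul_sum]
                exact Finset.sum_congr rfl fun i _ => by ring
        rw [Finset.sum_congr rfl hterm, ← Finset.mul_sum, Finset.sum_comm]
        apply mul_eq_zero_of_right
        apply Finset.sum_eq_zero
        intro i _
        rw [← Finset.mul_sum, FD (n+1) (n-i) (by omega), mul_zero]
      rw [hfz, hgz, sub_zero]
    have := hconst b (-(a + ((n+1:ℕ):ℝ)))
    rw [hb0] at this
    have hfg : f b = g b := by linarith [this]
    simpa [hf, hg] using hfg

lemma abel2' (N : ℕ) (a b : ℝ) :
    ∑ k ∈ range (N+1), ((N+1).choose k : ℝ) * cB a k *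
        (((N+1-k:ℕ):ℝ) * (b + ((N+1-k:ℕ):ℝ))^(N-k))
      = ((N:ℝ)+1) * (a+(b+1)+(N:ℝ))^N := by
  have hterm : ∀ k ∈ range (N+1), ((N+1).choose k : ℝ) * cB a k *
      (((N+1-k:ℕ):ℝ) * (b + ((N+1-k:ℕ):ℝ))^(N-k))
      = ((N:ℝ)+1) * ((N.choose k : ℝ) * cB a k * ((b+1) + ((N-k:ℕ):ℝ))^(N-k)) := by
    intro k hk
    have hk' : k ≤ N := by simp at hk; omega
    have e2 : ((N+1-k:ℕ):ℝ) = ((N-k:ℕ):ℝ) + 1 := by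
      have : N+1-k = (N-k)+1 := by omega
      rw [this]; push_cast; ring
    have e3 : (((N+1).choose k : ℕ):ℝ) * ((N+1-k:ℕ):ℝ) = ((N:ℝ)+1) * (N.choose k : ℝ) := by
      have h4 : (((N+1) * N.choose k : ℕ):ℝ) = (((N+1).choose k * (N+1-k) : ℕ):ℝ) :=
        congrArg _ (chooseid N k)
      push_cast at h4
      linarith
    calc ((N+1).choose k : ℝ) * cB a k * (((N+1-k:ℕ):ℝ) * (b + ((N+1-k:ℕ):ℝ))^(N-k))
        = ((((N+1).choose k : ℕ):ℝ) * ((N+1-k:ℕ):ℝ)) * cB a k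
          * ((b + ((N+1-k:ℕ):ℝ))^(N-k)) := by ring
      _ = _ := by rw [e3, e2]; ring_nf
  rw [Finset.sum_congr rfl hterm, ← Finset.mul_sum, abel2 N a (b+1)]

lemma abelConv (n : ℕ) (a b : ℝ) :
    ∑ k ∈ range (n+1), (n.choose k : ℝ) * cB a k * cB b (n-k) = cB (a+b) n := by
  match n with
  | 0 => simp [cB]
  | (N+1) =>
    have h2 := abel2 (N+1) a b
    rw [Finset.sum_range_succ] at h2 ⊢
    have hlastS : ((N+1).choose (N+1) : ℝ) * cB a (N+1) *
        (b + ((N+1-(N+1):ℕ):ℝ))^(N+1-(N+1)) = cB a (N+1) := by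
      simp
    have hlastC : ((N+1).choose (N+1) : ℝ) * cB a (N+1) * cB b (N+1-(N+1)) = cB a (N+1) := by
      have : N+1-(N+1) = 0 := by omega
      rw [this]
      simp [cB]
    rw [hlastS] at h2
    rw [hlastC]
    have hsplit : ∀ k ∈ range (N+1), ((N+1).choose k : ℝ) * cB a k *
        (b + ((N+1-k:ℕ):ℝ))^(N+1-k)
        = ((N+1).choose k : ℝ) * cB a k * cB b (N+1-k)
          + ((N+1).choose k : ℝ) * cB a k *
            (((N+1-k:ℕ):ℝ) * (b + ((N+1-k:ℕ):ℝ))^(N-k)) := by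
      intro k hk
      have hk' : k ≤ N := by simp at hk; omega
      have e1 : N+1-k = (N-k)+1 := by omega
      have ecB : cB b (N+1-k) = b * (b + ((N+1-k:ℕ):ℝ))^(N-k) := by
        rw [e1]
        simp only [cB]
        norm_cast
      have epow : (b + ((N+1-k:ℕ):ℝ))^(N+1-k)
          = (b + ((N+1-k:ℕ):ℝ))^(N-k) * (b + ((N+1-k:ℕ):ℝ)) := by
        rw [e1, pow_succ]
      rw [epow, ecB]
      ring
    rw [Finset.sum_congr rfl hsplit, Finset.sum_add_distrib, abel2' N a b] at h2
    have hpow : (a+b+((N+1:ℕ):ℝ))^(N+1)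
        = (a+b+((N+1:ℕ):ℝ))^N * (a+b+((N+1:ℕ):ℝ)) := pow_succ _ _
    have hcB : cB (a+b) (N+1) = (a+b) * (a+b+((N+1:ℕ):ℝ))^N := by
      simp only [cB]
      norm_cast
    have hc : a+(b+1)+(N:ℝ) = a+b+((N+1:ℕ):ℝ) := by push_cast; ring
    rw [hc] at h2
    rw [hcB]
    rw [hpow] at h2
    push_cast at h2 ⊢
    linear_combination h2

noncomputable def Af (x a : ℝ) (n : ℕ) : ℝ := cB a n * x^n / n.factorial
noncomputable def AF (x a : ℝ) : ℝ := ∑' n, Af x a n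
noncomputable def Df (x s : ℝ) (n : ℕ) : ℝ :=
  if n = 0 then 0 else (s+n)^(n-1) * x^n / n.factorial
noncomputable def DF (x s : ℝ) : ℝ := ∑' n, Df x s n
noncomputable def Gf (x s : ℝ) (n : ℕ) : ℝ := (s+n)^n * x^n / n.factorial
noncomputable def GF (x s : ℝ) : ℝ := ∑' n, Gf x s n

/-- `(s+n)^n ≤ n^n e^s` for `s ≥ 0`. -/
lemma nm_bound {s : ℝ} (hs : 0 ≤ s) (n : ℕ) : (s+n)^n ≤ (n:ℝ)^n * Real.exp s := by
  match n with
  | 0 => simpa using Real.one_le_exp hs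
  | (k+1) =>
    set n := k+1
    have hn : (0:ℝ) < n := by positivity
    have h1 : s + n ≤ n * Real.exp (s/n) := by
      have := Real.add_one_le_exp (s/n)
      have h2 : (s/n + 1) * n ≤ Real.exp (s/n) * n := by
        apply mul_le_mul_of_nonneg_right this hn.le
      calc s + n = (s/n + 1) * n := by field_simp
        _ ≤ Real.exp (s/n) * n := h2
        _ = n * Real.exp (s/n) := by ring
    calc (s+n)^(n:ℕ) ≤ ((n:ℝ) * Real.exp (s/n))^(n:ℕ) := by
          apply pow_le_pow_left₀ (by positivity) h1
      _ = (n:ℝ)^(n:ℕ) * (Real.exp (s/n))^(n:ℕ) := mul_pow _ _ _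
      _ = (n:ℝ)^(n:ℕ) * Real.exp s := by
          rw [← Real.exp_nat_mul]
          congr 2
          field_simp
lemma npow_fact (n : ℕ) : ((n:ℝ))^n ≤ Real.exp 1 ^ n * n.factorial := by
  have h := Real.pow_div_factorial_le_exp (x := (n:ℝ)) (Nat.cast_nonneg n) n
  have h2 : Real.exp (n:ℝ) = Real.exp 1 ^ n := by
    rw [← Real.exp_nat_mul]; norm_num
  rw [h2] at h
  have hf : (0:ℝ) < n.factorial := by positivity
  calc ((n:ℝ))^n = ((n:ℝ)^n / n.factorial) * n.factorial := by field_simp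
    _ ≤ Real.exp 1 ^ n * n.factorial := by
        apply mul_le_mul_of_nonneg_right h hf.le

lemma pow_fact_bound {x : ℝ} (hx : 0 ≤ x) (n : ℕ) :
    (n:ℝ)^n * x^n / n.factorial ≤ (Real.exp 1 * x)^n := by
  have hf : (0:ℝ) < n.factorial := by positivity
  rw [div_le_iff₀ hf, mul_pow]
  calc (n:ℝ)^n * x^n ≤ (Real.exp 1 ^ n * n.factorial) * x^n := by
        apply mul_le_mul_of_nonneg_right (npow_fact n) (by positivity)
    _ = Real.exp 1 ^ n * x ^ n * n.factorial := by ring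

lemma Gf_bound {x s : ℝ} (hx : 0 ≤ x) (hs : 0 ≤ s) (n : ℕ) :
    Gf x s n ≤ Real.exp s * (Real.exp 1 * x)^n := by
  unfold Gf
  calc (s+n)^n * x^n / n.factorial ≤ ((n:ℝ)^n * Real.exp s) * x^n / n.factorial := by
        gcongr
        exact nm_bound hs n
    _ = Real.exp s * ((n:ℝ)^n * x^n / n.factorial) := by ring
    _ ≤ Real.exp s * (Real.exp 1 * x)^n := by
        apply mul_le_mul_of_nonneg_left (pow_fact_bound hx n) (Real.exp_pos s).le

lemma Df_bound {x s : ℝ} (hx : 0 ≤ x) (n : ℕ) :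
    |Df x s n| ≤ Real.exp |s| * (Real.exp 1 * x)^n := by
  match n with
  | 0 =>
    simp [Df]
    positivity

  | (k+1) =>
    set n := k+1 with hn
    have hn0 : n ≠ 0 := Nat.succ_ne_zero k
    simp only [Df, if_neg hn0]
    have h1 : |(s+(n:ℝ))^(n-1) * x^n / n.factorial| = |s+(n:ℝ)|^(n-1) * x^n / n.factorial := by
      rw [abs_div, abs_mul, abs_pow, abs_of_nonneg (pow_nonneg hx n),
        abs_of_nonneg (by positivity : (0:ℝ) ≤ (n.factorial:ℝ))]
    rw [h1]
    have h2 : |s+(n:ℝ)|^(n-1) ≤ (|s|+(n:ℝ))^(n-1) := by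
      apply pow_le_pow_left₀ (abs_nonneg _)
      exact (abs_add_le _ _).trans (by simp)
    have h3 : (|s|+(n:ℝ))^(n-1) ≤ (|s|+(n:ℝ))^n := by
      apply pow_le_pow_right₀
      · have : (1:ℝ) ≤ (n:ℝ) := by exact_mod_cast Nat.one_le_iff_ne_zero.mpr hn0
        linarith [abs_nonneg s]
      · omega
    have h4 : (|s|+(n:ℝ))^n ≤ (n:ℝ)^n * Real.exp |s| := nm_bound (abs_nonneg s) n
    calc |s+(n:ℝ)|^(n-1) * x^n / n.factorial
        ≤ ((n:ℝ)^n * Real.exp |s|) * x^n / n.factorial := by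
          gcongr
          exact (h2.trans h3).trans h4
      _ = Real.exp |s| * ((n:ℝ)^n * x^n / n.factorial) := by ring
      _ ≤ Real.exp |s| * (Real.exp 1 * x)^n := by
          apply mul_le_mul_of_nonneg_left (pow_fact_bound hx n) (Real.exp_pos _).le

lemma Af_bound {x a : ℝ} (hx : 0 ≤ x) (n : ℕ) :
    |Af x a n| ≤ (1+|a|) * Real.exp |a| * (Real.exp 1 * x)^n := by
  have key : ∀ n, Af x a n = (if n = 0 then (1:ℝ) else 0) + a * Df x a n := by
    intro n
    match n with
    | 0 => simp [Af, Df, cB]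
    | (k+1) =>
      simp only [Af, Df, cB, if_neg (Nat.succ_ne_zero k), Nat.add_sub_cancel]
      push_cast
      ring
  rw [key n]
  match n with
  | 0 =>
    simp [Df]
    nlinarith [abs_nonneg a, Real.one_le_exp (abs_nonneg a)]
  | (k+1) =>
    rw [if_neg (Nat.succ_ne_zero k), zero_add, abs_mul]
    calc |a| * |Df x a (k+1)| ≤ |a| * (Real.exp |a| * (Real.exp 1 * x)^(k+1)) := by
          apply mul_le_mul_of_nonneg_left (Df_bound hx (k+1)) (abs_nonneg a)
      _ ≤ (1+|a|) * Real.exp |a| * (Real.exp 1 * x)^(k+1) := by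
          have h1 : (0:ℝ) ≤ Real.exp |a| * (Real.exp 1 * x)^(k+1) := by positivity
          nlinarith [h1]


section SS
variable {x : ℝ}

lemma summable_geom_c (hxe : Real.exp 1 * x < 1) (hx0 : 0 < x) (C : ℝ) :
    Summable (fun n : ℕ => C * (Real.exp 1 * x)^n) :=
  (summable_geometric_of_lt_one (by positivity) hxe).mul_left C

lemma tsum_geom_c (hxe : Real.exp 1 * x < 1) (hx0 : 0 < x) (C : ℝ) :
    ∑' n : ℕ, C * (Real.exp 1 * x)^n = C * (1 - Real.exp 1 * x)⁻¹ := by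
  rw [tsum_mul_left, tsum_geometric_of_lt_one (by positivity) hxe]

variable (hx0 : 0 < x) (hxe : Real.exp 1 * x < 1)
include hx0 hxe

lemma summable_Af (a : ℝ) : Summable (fun n => |Af x a n|) := by
  apply Summable.of_nonneg_of_le (fun n => abs_nonneg _) (fun n => Af_bound hx0.le n)
  exact summable_geom_c hxe hx0 _

lemma summable_Af' (a : ℝ) : Summable (fun n => Af x a n) :=
  (summable_Af hx0 hxe a).of_abs

lemma summable_Df (s : ℝ) : Summable (fun n => Df x s n) := by
  apply Summable.of_abs
  apply Summable.of_nonneg_of_le (fun n => abs_nonneg _) (fun n => Df_bound hx0.le n)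
  exact summable_geom_c hxe hx0 _

lemma summable_Gf {s : ℝ} (hs : 0 ≤ s) : Summable (fun n => Gf x s n) := by
  apply Summable.of_nonneg_of_le (fun n => by unfold Gf; positivity)
    (fun n => Gf_bound hx0.le hs n)
  exact summable_geom_c hxe hx0 _

lemma GF_nonneg {s : ℝ} (hs : 0 ≤ s) : 0 ≤ GF x s :=
  tsum_nonneg (fun n => by unfold Gf; positivity)

lemma GF_le {s : ℝ} (hs : 0 ≤ s) : GF x s ≤ Real.exp s * (1 - Real.exp 1 * x)⁻¹ := by
  rw [← tsum_geom_c hxe hx0]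
  exact Summable.tsum_le_tsum (fun n => Gf_bound hx0.le hs n) (summable_Gf hx0 hxe hs)
    (summable_geom_c hxe hx0 _)

lemma AF_zero : AF x 0 = 1 := by
  have h : ∀ n : ℕ, Af x 0 n = if n = 0 then (1:ℝ) else 0 := by
    intro n
    match n with
    | 0 => simp [Af, cB]
    | (k+1) => simp [Af, cB]
  unfold AF
  rw [tsum_congr h, tsum_ite_eq]

lemma AF_eq (a : ℝ) : AF x a = 1 + a * DF x a := by
  have key : ∀ n, Af x a n = (if n = 0 then (1:ℝ) else 0) + a * Df x a n := by
    intro n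
    match n with
    | 0 => simp [Af, Df, cB]
    | (k+1) =>
      simp only [Af, Df, cB, if_neg (Nat.succ_ne_zero k), Nat.add_sub_cancel]
      push_cast
      ring
  unfold AF
  rw [tsum_congr key, Summable.tsum_add ⟨1, hasSum_ite_eq 0 1⟩ ((summable_Df hx0 hxe a).mul_left a),
    tsum_ite_eq, tsum_mul_left]
  rfl

lemma AF_mul (a b : ℝ) : AF x a * AF x b = AF x (a+b) := by
  unfold AF
  rw [tsum_mul_tsum_eq_tsum_sum_range_of_summable_norm (f := Af x a) (g := Af x b)
    (summable_Af hx0 hxe a) (summable_Af hx0 hxe b)]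
  apply tsum_congr
  intro n
  have h := abelConv n a b
  have hterm : ∀ k ∈ range (n+1), Af x a k * Af x b (n-k)
      = ((n.choose k : ℝ) * cB a k * cB b (n-k)) * (x^n / n.factorial) := by
    intro k hk
    have hk' : k ≤ n := by simp at hk; omega
    have hfact : ((n.choose k : ℕ) : ℝ) * (k.factorial : ℝ) * ((n-k).factorial : ℝ)
        = (n.factorial : ℝ) := by
      exact_mod_cast congrArg (fun z : ℕ => (z:ℝ)) (Nat.choose_mul_factorial_mul_factorial hk')
    have hxp : x^k * x^(n-k) = x^n := by
      rw [← pow_add]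
      congr 1
      omega
    have hk0 : (k.factorial : ℝ) ≠ 0 := by positivity
    have hnk0 : ((n-k).factorial : ℝ) ≠ 0 := by positivity
    have hn0 : (n.factorial : ℝ) ≠ 0 := by positivity
    unfold Af
    field_simp
    calc cB a k * x ^ k * cB b (n - k) * x ^ (n - k) * (n.factorial:ℝ)
        = (cB a k * cB b (n-k)) * (x^k * x^(n-k)) * (n.factorial:ℝ) := by ring
      _ = (cB a k * cB b (n-k)) * x^n * (n.factorial:ℝ) := by rw [hxp]
      _ = cB a k * (k.factorial:ℝ) * cB b (n - k) * ((n - k).factorial:ℝ) * (n.choose k : ℝ) * x ^ n := by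
          rw [← hfact]; ring
  rw [Finset.sum_congr rfl hterm, ← Finset.sum_mul, h]
  unfold Af
  ring

lemma AF_pow (a : ℝ) (m : ℕ) : AF x ((m:ℝ) * a) = (AF x a)^m := by
  induction m with
  | zero => simpa using AF_zero hx0 hxe
  | succ m ih =>
    have : ((m+1:ℕ):ℝ) * a = (m:ℝ) * a + a := by push_cast; ring
    rw [this, ← AF_mul hx0 hxe, ih, pow_succ]

lemma DF_cont_aux : Continuous (fun t : ℝ => DF x (max (-1) (min 1 t))) := by
  unfold DF
  apply continuous_tsum (u := fun n => Real.exp 1 * (Real.exp 1 * x)^n)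
  · intro n
    match n with
    | 0 => simpa [Df] using continuous_const
    | (k+1) =>
      simp only [Df, if_neg (Nat.succ_ne_zero k)]
      fun_prop
  · exact summable_geom_c hxe hx0 _
  · intro n t
    have h1 : |max (-1) (min 1 t)| ≤ 1 := by
      rw [abs_le]
      constructor
      · exact le_max_left _ _
      · exact max_le (by norm_num) (min_le_left _ _)
    calc ‖Df x (max (-1) (min 1 t)) n‖
        ≤ Real.exp |max (-1) (min 1 t)| * (Real.exp 1 * x)^n := Df_bound hx0.le n
      _ ≤ Real.exp 1 * (Real.exp 1 * x)^n := by
          apply mul_le_mul_of_nonneg_right (Real.exp_le_exp.mpr h1) (by positivity)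

lemma DF_tendsto {sq : ℕ → ℝ} (hsq : Tendsto sq atTop (nhds 0)) :
    Tendsto (fun m => DF x (sq m)) atTop (nhds (DF x 0)) := by
  have hcont := DF_cont_aux hx0 hxe
  have h0 : max (-1) (min 1 (0:ℝ)) = 0 := by norm_num
  have h1 : Tendsto (fun m => DF x (max (-1) (min 1 (sq m)))) atTop (nhds (DF x 0)) := by
    have h2 := (hcont.tendsto 0).comp hsq
    rwa [h0] at h2
  apply h1.congr'
  have hev : ∀ᶠ m in atTop, sq m ∈ Set.Icc (-1:ℝ) 1 :=
    hsq (Icc_mem_nhds (by norm_num) (by norm_num))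
  filter_upwards [hev] with m hm
  have : max (-1) (min 1 (sq m)) = sq m := by
    rcases hm with ⟨hl, hr⟩
    rw [min_eq_right hr, max_eq_right hl]
  rw [this]

theorem AF_exp (a : ℝ) : AF x a = Real.exp (a * DF x 0) := by
  rcases eq_or_ne a 0 with rfl | ha
  · rw [AF_zero hx0 hxe]; simp
  · set u := DF x 0 with hu
    set z : ℕ → ℝ := fun m => (a/(m+1)) * DF x (a/(m+1)) with hz
    have hsq : Tendsto (fun m : ℕ => a/((m:ℝ)+1)) atTop (nhds 0) := by
      have h := tendsto_one_div_add_atTop_nhds_zero_nat (𝕜 := ℝ)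
      have h2 := h.const_mul a
      simpa [div_eq_mul_inv, mul_comm] using h2
    have hD : Tendsto (fun m : ℕ => DF x (a/((m:ℝ)+1))) atTop (nhds u) :=
      DF_tendsto hx0 hxe hsq
    have hzlim : Tendsto z atTop (nhds 0) := by
      have := hsq.mul hD
      simpa using this
    have h1 : ∀ m : ℕ, AF x a = (1 + z m)^(m+1) := by
      intro m
      have e1 : a = ((m+1:ℕ):ℝ) * (a/((m:ℝ)+1)) := by
        push_cast
        field_simp
      calc AF x a = AF x (((m+1:ℕ):ℝ) * (a/((m:ℝ)+1))) := by rw [← e1]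
        _ = (AF x (a/((m:ℝ)+1)))^(m+1) := AF_pow hx0 hxe _ _
        _ = (1 + z m)^(m+1) := by rw [AF_eq hx0 hxe]
    have hmz : Tendsto (fun m : ℕ => ((m:ℝ)+1) * z m) atTop (nhds (a * u)) := by
      have he : ∀ m : ℕ, ((m:ℝ)+1) * z m = a * DF x (a/((m:ℝ)+1)) := by
        intro m
        have hm0 : ((m:ℝ)+1) ≠ 0 := by positivity
        show ((m:ℝ)+1) * ((a/((m:ℝ)+1)) * DF x (a/((m:ℝ)+1))) = _
        field_simp
      rw [show (fun m : ℕ => ((m:ℝ)+1) * z m)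
          = fun m : ℕ => a * DF x (a/((m:ℝ)+1)) from funext he]
      exact hD.const_mul a
    -- log of AF x a via squeeze
    have hL : ∀ m : ℕ, Real.log (AF x a) = ((m:ℝ)+1) * Real.log (1 + z m) := by
      intro m
      rw [h1 m, Real.log_pow]
      push_cast
      ring
    have hev : ∀ᶠ m in atTop, |z m| < 1/2 := by
      have := hzlim (Metric.ball_mem_nhds (0:ℝ) (by norm_num : (0:ℝ) < 1/2))
      simpa [Real.dist_eq] using this
    have hlow : Tendsto (fun m : ℕ => (((m:ℝ)+1) * z m) * (1 + z m)⁻¹) atTop (nhds (a*u)) := by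
      have h2 : Tendsto (fun m : ℕ => (1 + z m)⁻¹) atTop (nhds 1) := by
        have h3 : Tendsto (fun m : ℕ => 1 + z m) atTop (nhds 1) := by
          simpa using (tendsto_const_nhds (x := (1:ℝ)) (f := atTop)).add hzlim
        have := h3.inv₀ (by norm_num)
        simpa using this
      simpa using hmz.mul h2
    have hsqz : Tendsto (fun m : ℕ => ((m:ℝ)+1) * Real.log (1 + z m)) atTop (nhds (a*u)) := by
      apply tendsto_of_tendsto_of_tendsto_of_le_of_le' hlow hmz
      · filter_upwards [hev] with m hm
        have hpos : 0 < 1 + z m := by cases abs_lt.mp hm; linarith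
        have hlog : 1 - (1+z m)⁻¹ ≤ Real.log (1 + z m) :=
          Real.one_sub_inv_le_log_of_pos hpos
        have hmn : (0:ℝ) ≤ (m:ℝ)+1 := by positivity
        have e : 1 - (1+z m)⁻¹ = z m * (1+z m)⁻¹ := by
          field_simp
          ring
        rw [e] at hlog
        calc ((m:ℝ)+1) * z m * (1+z m)⁻¹ = ((m:ℝ)+1) * (z m * (1+z m)⁻¹) := by ring
          _ ≤ ((m:ℝ)+1) * Real.log (1 + z m) := by
              apply mul_le_mul_of_nonneg_left hlog hmn
      · filter_upwards [hev] with m hm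
        have hpos : 0 < 1 + z m := by cases abs_lt.mp hm; linarith
        have hlog : Real.log (1 + z m) ≤ z m := by
          have := Real.log_le_sub_one_of_pos hpos
          linarith
        apply mul_le_mul_of_nonneg_left hlog (by positivity)
    have hconst : Tendsto (fun _ : ℕ => Real.log (AF x a)) atTop (nhds (Real.log (AF x a))) :=
      tendsto_const_nhds
    have hlogeq : Real.log (AF x a) = a * u := by
      apply tendsto_nhds_unique ?_ hsqz
      apply hconst.congr
      intro m
      exact hL m
    -- positivity of AF x a
    obtain ⟨m, hm⟩ := hev.exists
    have hApos : 0 < AF x a := by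
      rw [h1 m]
      have : 0 < 1 + z m := by cases abs_lt.mp hm; linarith
      positivity
    rw [← hlogeq, Real.exp_log hApos]

lemma u_eq : DF x 0 = x * Real.exp (DF x 0) := by
  have h1 : DF x 0 = x * AF x 1 := by
    unfold DF AF
    rw [Summable.tsum_eq_zero_add (summable_Df hx0 hxe 0)]
    have h0 : Df x 0 0 = 0 := by simp [Df]
    rw [h0, zero_add, ← tsum_mul_left]
    apply tsum_congr
    intro m
    match m with
    | 0 => simp [Df, Af, cB]
    | (k+1) =>
      show (0 + ((k+1+1:ℕ):ℝ))^(k+1+1-1) * x^(k+1+1) / ((k+1+1).factorial : ℝ)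
        = x * (cB 1 (k+1) * x^(k+1) / ((k+1).factorial : ℝ))
      have hcB : cB 1 (k+1) = (1 + ((k+1:ℕ):ℝ))^k := by
        simp [cB]
      rw [hcB]
      have e1 : (0:ℝ) + ((k+1+1:ℕ):ℝ) = (k:ℝ)+2 := by push_cast; ring
      have e2 : (1:ℝ) + ((k+1:ℕ):ℝ) = (k:ℝ)+2 := by push_cast; ring
      have e3 : ((k+1+1).factorial : ℝ) = ((k:ℝ)+2) * ((k+1).factorial : ℝ) := by
        rw [Nat.factorial_succ (k+1)]; push_cast; ring
      rw [e1, e2, e3]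
      have e4 : k+1+1-1 = k+1 := by omega
      rw [e4, pow_succ]
      have hne : ((k+1).factorial : ℝ) ≠ 0 := by positivity
      have hne2 : (k:ℝ)+2 ≠ 0 := by positivity
      field_simp
      ring
  conv_lhs => rw [h1]
  rw [AF_exp hx0 hxe 1, one_mul]

lemma GF_rec {s : ℝ} (hs : 0 ≤ s) : GF x s = AF x s + x * GF x (s+1) := by
  have key : ∀ n, Gf x s n = Af x s n + (if n = 0 then 0 else x * Gf x (s+1) (n-1)) := by
    intro n
    match n with
    | 0 => simp [Gf, Af, cB]
    | (k+1) =>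
      simp only [Gf, Af, cB, if_neg (Nat.succ_ne_zero k), Nat.add_sub_cancel]
      have e3 : ((k+1).factorial : ℝ) = ((k:ℝ)+1) * (k.factorial : ℝ) := by
        rw [Nat.factorial_succ k]; push_cast; ring
      have e1 : s + ((k+1:ℕ):ℝ) = s + (k:ℝ) + 1 := by push_cast; ring
      have e2 : s + 1 + (k:ℝ) = s + (k:ℝ) + 1 := by ring
      rw [e1, e2, e3, pow_succ]
      have hne : (k.factorial : ℝ) ≠ 0 := by positivity
      have hne2 : (k:ℝ)+1 ≠ 0 := by positivity
      field_simp
      ring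
  have hsum2 : Summable (fun n : ℕ => if n = 0 then 0 else x * Gf x (s+1) (n-1)) := by
    apply (summable_nat_add_iff 1).mp
    have : (fun n : ℕ => if n+1 = 0 then (0:ℝ) else x * Gf x (s+1) (n+1-1))
        = fun n => x * Gf x (s+1) n := by
      funext n
      simp
    rw [this]
    exact (summable_Gf hx0 hxe (by linarith : (0:ℝ) ≤ s+1)).mul_left x
  unfold GF AF
  rw [tsum_congr key, Summable.tsum_add (summable_Af' hx0 hxe s) hsum2]
  congr 1
  have h6 : ∀ m : ℕ, (if m+1 = 0 then (0:ℝ) else x * Gf x (s+1) (m+1-1)) = x * Gf x (s+1) m := by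
    intro m; simp
  rw [Summable.tsum_eq_zero_add hsum2, tsum_congr h6, tsum_mul_left]
  simp

lemma GF_closed (hu1 : DF x 0 < 1) {α : ℝ} (hα : 0 ≤ α) :
    GF x α = Real.exp (α * DF x 0) / (1 - DF x 0) := by
  set u := DF x 0 with hu
  have hu0 : 0 ≤ u := by
    apply tsum_nonneg
    intro n
    match n with
    | 0 => simp [Df]
    | (k+1) =>
      simp only [Df, if_neg (Nat.succ_ne_zero k)]
      have : (0:ℝ) ≤ 0 + ((k+1:ℕ):ℝ) := by positivity
      positivity
  have hne : (1:ℝ) - u ≠ 0 := by linarith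
  set E : ℝ → ℝ := fun s => Real.exp (s * u) / (1 - u) with hE
  clear_value u
  have hstep : ∀ s : ℝ, 0 ≤ s → GF x s - E s = x * (GF x (s+1) - E (s+1)) := by
    intro s hs
    have h1 : GF x s = Real.exp (s * u) + x * GF x (s+1) := by
      rw [GF_rec hx0 hxe hs, AF_exp hx0 hxe s, ← hu]
    have h2 : E s = Real.exp (s * u) + x * E (s+1) := by
      simp only [hE]
      have hxe2 : x * Real.exp ((s+1)*u) = u * Real.exp (s*u) := by
        have : Real.exp ((s+1)*u) = Real.exp (s*u) * Real.exp u := by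
          rw [← Real.exp_add]; ring_nf
        rw [this]
        have h3 := u_eq hx0 hxe
        rw [← hu] at h3
        calc x * (Real.exp (s*u) * Real.exp u) = (x * Real.exp u) * Real.exp (s*u) := by ring
          _ = u * Real.exp (s*u) := by rw [← h3]
      field_simp
      rw [show u * (s+1) = (s+1) * u by ring]
      linear_combination -hxe2
    rw [h1, h2]
    ring
  have hiter : ∀ K : ℕ, GF x α - E α = x^K * (GF x (α+K) - E (α+K)) := by
    intro K
    induction K with
    | zero => simp
    | succ K ih =>
      rw [ih, hstep (α+K) (by positivity)]
      have : α + (K:ℝ) + 1 = α + ((K+1:ℕ):ℝ) := by push_cast; ring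
      rw [this]
      ring
  set C := (1 - Real.exp 1 * x)⁻¹ + (1-u)⁻¹ with hC
  clear_value C
  have hbound : ∀ K : ℕ, |GF x α - E α| ≤ (Real.exp α * C) * (Real.exp 1 * x)^K := by
    intro K
    rw [hiter K]
    have hs : (0:ℝ) ≤ α + K := by positivity
    have h1 : |GF x (α+K) - E (α+K)| ≤ Real.exp (α+K) * C := by
      have hG1 : GF x (α+K) ≤ Real.exp (α+K) * (1 - Real.exp 1 * x)⁻¹ := GF_le hx0 hxe hs
      have hG0 : 0 ≤ GF x (α+K) := GF_nonneg hx0 hxe hs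
      have hE1 : 0 ≤ E (α+K) := by
        apply div_nonneg (Real.exp_pos _).le
        linarith
      have hE2 : E (α+K) ≤ Real.exp (α+K) * (1-u)⁻¹ := by
        simp only [hE]
        rw [div_eq_mul_inv]
        apply mul_le_mul_of_nonneg_right _ (by rw [inv_nonneg]; linarith)
        apply Real.exp_le_exp.mpr
        nlinarith
      have hCsplit : Real.exp (α+(K:ℝ)) * C
          = Real.exp (α+(K:ℝ)) * (1 - Real.exp 1 * x)⁻¹ + Real.exp (α+(K:ℝ)) * (1-u)⁻¹ := by
        rw [hC]; ring
      have hp1 : 0 < Real.exp (α+(K:ℝ)) * (1 - Real.exp 1 * x)⁻¹ :=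
        mul_pos (Real.exp_pos _) (by rw [inv_pos]; linarith)
      have hp2 : 0 < Real.exp (α+(K:ℝ)) * (1-u)⁻¹ :=
        mul_pos (Real.exp_pos _) (by rw [inv_pos]; linarith)
      rw [abs_sub_le_iff]
      constructor
      · linarith
      · linarith
    rw [abs_mul, abs_pow, abs_of_nonneg hx0.le]
    calc x^K * |GF x (α+K) - E (α+K)| ≤ x^K * (Real.exp (α+K) * C) := by
          apply mul_le_mul_of_nonneg_left h1 (by positivity)
      _ = (Real.exp α * C) * (Real.exp K * x^K) := by
          rw [Real.exp_add]; ring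
      _ = (Real.exp α * C) * (Real.exp 1 * x)^K := by
          rw [mul_pow, ← Real.exp_nat_mul]; norm_num
  have hlim : Tendsto (fun K : ℕ => (Real.exp α * C) * (Real.exp 1 * x)^K) atTop (nhds 0) := by
    have h := tendsto_pow_atTop_nhds_zero_of_lt_one (by positivity : (0:ℝ) ≤ Real.exp 1 * x) hxe
    simpa using h.const_mul (Real.exp α * C)
  have habs : |GF x α - E α| ≤ 0 :=
    ge_of_tendsto hlim (Filter.Eventually.of_forall hbound)
  have : GF x α - E α = 0 := abs_eq_zero.mp (le_antisymm habs (abs_nonneg _))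
  rw [hE] at this
  linarith [this]

end SS

lemma te_mono : StrictMonoOn (fun t : ℝ => t * Real.exp (-t)) (Set.Icc 0 1) := by
  apply strictMonoOn_of_deriv_pos (convex_Icc 0 1)
  · apply Continuous.continuousOn
    fun_prop
  · intro t ht
    rw [interior_Icc] at ht
    have hd : HasDerivAt (fun t : ℝ => t * Real.exp (-t)) ((1-t) * Real.exp (-t)) t := by
      have h1 : HasDerivAt (fun t : ℝ => Real.exp (-t)) (-Real.exp (-t)) t := by
        simpa using (hasDerivAt_neg t).exp
      have h2 : HasDerivAt (fun t : ℝ => t * Real.exp (-t)) (1 * Real.exp (-t) + t * -Real.exp (-t)) t := (hasDerivAt_id t).fun_mul h1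
      convert h2 using 1
      simp
      ring
    rw [hd.deriv]
    have h3 := Real.exp_pos (-t)
    obtain ⟨h4, h5⟩ := ht
    nlinarith

lemma DF_zero_zero : DF 0 0 = 0 := by
  unfold DF
  have h : ∀ n : ℕ, Df 0 0 n = 0 := by
    intro n
    match n with
    | 0 => simp [Df]
    | (k+1) => simp [Df]
  rw [tsum_congr h, tsum_zero]

lemma DF_at_lam {lam : ℝ} (h0 : 0 < lam) (h1 : lam < 1) :
    DF (lam * Real.exp (-lam)) 0 = lam := by
  set f : ℝ → ℝ := fun t => t * Real.exp (-t) with hfdef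
  set x := lam * Real.exp (-lam) with hxdef
  have hmem : ∀ t : ℝ, 0 ≤ t → t ≤ lam → t ∈ Set.Icc (0:ℝ) 1 :=
    fun t ht hl => ⟨ht, by linarith⟩
  have hflt : ∀ t : ℝ, 0 ≤ t → t ≤ lam → f t < Real.exp (-1) := by
    intro t ht hl
    have h2 : f t < f 1 :=
      te_mono (hmem t ht hl) (Set.mem_Icc.mpr ⟨zero_le_one, le_rfl⟩) (by linarith)
    simpa [hfdef] using h2
  have hfx : ∀ t : ℝ, 0 ≤ t → t ≤ lam → f t ≤ x := by
    intro t ht hl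
    rcases lt_or_eq_of_le hl with hl' | rfl
    · exact (te_mono (hmem t ht hl) (hmem lam h0.le le_rfl) hl').le
    · exact le_of_eq rfl
  have hf0 : ∀ t : ℝ, 0 ≤ t → 0 ≤ f t := by
    intro t ht
    simp only [hfdef]
    positivity
  have hxlt : x < Real.exp (-1) := hflt lam h0.le le_rfl
  have hx0 : 0 < x := by
    simp only [hxdef]; positivity
  have hexe : Real.exp 1 * Real.exp (-1) = 1 := by
    rw [← Real.exp_add]; norm_num
  have hxe : Real.exp 1 * x < 1 := by
    calc Real.exp 1 * x < Real.exp 1 * Real.exp (-1) := by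
          apply mul_lt_mul_of_pos_left hxlt (Real.exp_pos 1)
      _ = 1 := hexe
  -- the clamp
  set cl : ℝ → ℝ := fun t => max 0 (min lam t) with hcl
  have hclmem : ∀ t : ℝ, 0 ≤ cl t ∧ cl t ≤ lam := by
    intro t
    constructor
    · exact le_max_left _ _
    · exact max_le h0.le (min_le_left _ _)
  have hcleq : ∀ t : ℝ, 0 ≤ t → t ≤ lam → cl t = t := by
    intro t ht hl
    simp only [hcl]
    rw [min_eq_right hl, max_eq_right ht]
  set W : ℝ → ℝ := fun t => DF (f (cl t)) 0 with hW
  have hWcont : Continuous W := by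
    have : W = fun t => ∑' n, Df (f (cl t)) 0 n := rfl
    rw [this]
    apply continuous_tsum (u := fun n => (Real.exp 1 * x)^n)
    · intro n
      match n with
      | 0 => simpa [Df] using continuous_const
      | (k+1) =>
        simp only [Df, if_neg (Nat.succ_ne_zero k)]
        apply Continuous.div_const
        apply Continuous.mul continuous_const
        apply Continuous.pow
        simp only [hfdef, hcl]
        fun_prop
    · exact summable_geometric_of_lt_one (by positivity) hxe
    · intro n t
      match n with
      | 0 => simp [Df]
      | (k+1) =>
        simp only [Df, if_neg (Nat.succ_ne_zero k), Nat.add_sub_cancel]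
        have hcl0 := (hclmem t).1
        have hclx := hfx (cl t) (hclmem t).1 (hclmem t).2
        have hf0' := hf0 (cl t) (hclmem t).1
        rw [norm_eq_abs, abs_of_nonneg (by positivity)]
        calc (0+((k+1:ℕ):ℝ))^k * (f (cl t))^(k+1) / ((k+1).factorial : ℝ)
            ≤ ((k+1:ℕ):ℝ)^(k+1) * x^(k+1) / ((k+1).factorial : ℝ) := by
              gcongr ?_ * ?_ ^ (k+1) / ((k+1).factorial : ℝ)
              · rw [zero_add]
                apply pow_le_pow_right₀
                · exact_mod_cast Nat.one_le_iff_ne_zero.mpr (Nat.succ_ne_zero k)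
                · omega
          _ ≤ (Real.exp 1 * x)^(k+1) := pow_fact_bound hx0.le (k+1)
  have hW0 : W 0 = 0 := by
    have h2 : cl 0 = 0 := hcleq 0 le_rfl h0.le
    simp only [hW, h2]
    have h3 : f 0 = 0 := by simp [hfdef]
    rw [h3]
    exact DF_zero_zero
  have hWeq : ∀ t : ℝ, 0 < t → t ≤ lam → W t = f t * Real.exp (W t) := by
    intro t ht hl
    have h2 : cl t = t := hcleq t ht.le hl
    simp only [hW, h2]
    have h3 : Real.exp 1 * f t < 1 := by
      have h4 := mul_lt_mul_of_pos_left (hflt t ht.le hl) (Real.exp_pos 1)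
      calc Real.exp 1 * f t < Real.exp 1 * Real.exp (-1) := h4
        _ = 1 := hexe
    exact u_eq (by simpa [hfdef] using mul_pos ht (Real.exp_pos (-t))) h3
  have hWne1 : ∀ t : ℝ, 0 ≤ t → t ≤ lam → W t ≠ 1 := by
    intro t ht hl hW1
    rcases eq_or_lt_of_le ht with rfl | ht'
    · rw [hW0] at hW1; norm_num at hW1
    · have h2 := hWeq t ht' hl
      rw [hW1] at h2
      have h3 : f t = Real.exp (-1) := by
        have h4 := Real.exp_pos 1
        have h5 : f t * Real.exp 1 = 1 := by linarith [h2]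
        have h6 : Real.exp (-1) * Real.exp 1 = 1 := by rw [mul_comm]; exact hexe
        have h7 : Real.exp 1 ≠ 0 := h4.ne'
        field_simp at h5 h6
        nlinarith [h5, h6]
      linarith [hflt t ht hl, h3.le]
  have hWlam : W lam < 1 := by
    by_contra hcon
    push_neg at hcon
    have hgt : 1 < W lam := lt_of_le_of_ne hcon (fun h => hWne1 lam h0.le le_rfl h.symm)
    have hIVT := intermediate_value_Icc h0.le hWcont.continuousOn
      (show (1:ℝ) ∈ Set.Icc (W 0) (W lam) by
        rw [hW0]; exact ⟨by norm_num, hgt.le⟩)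
    obtain ⟨t, ht, hWt⟩ := hIVT
    exact hWne1 t ht.1 ht.2 hWt
  -- conclude
  have hcllam : cl lam = lam := hcleq lam h0.le le_rfl
  have hWlam_eq : W lam = DF x 0 := by simp only [hW, hcllam, hxdef, hfdef]
  have hu0 : 0 ≤ W lam := by
    rw [hWlam_eq]
    apply tsum_nonneg
    intro n
    match n with
    | 0 => simp [Df]
    | (k+1) =>
      simp only [Df, if_neg (Nat.succ_ne_zero k)]
      have h9 : (0:ℝ) ≤ 0 + ((k+1:ℕ):ℝ) := by positivity
      positivity
  have heq : W lam = x * Real.exp (W lam) := hWeq lam h0 le_rfl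
  have hfu : f (W lam) = f lam := by
    simp only [hfdef]
    calc W lam * Real.exp (-W lam) = (x * Real.exp (W lam)) * Real.exp (-W lam) := by
          rw [← heq]
      _ = x * (Real.exp (W lam) * Real.exp (-W lam)) := by ring
      _ = x := by rw [← Real.exp_add]; simp
      _ = lam * Real.exp (-lam) := hxdef
  have hinj := te_mono.injOn
  have : W lam = lam := hinj ⟨hu0, hWlam.le⟩ ⟨h0.le, h1.le⟩ hfu
  rw [← hWlam_eq, this]

theorem stmt8 (θ lam : ℝ) (hθ : 0 < θ) (hlam : lam ∈ Set.Ioo (0 : ℝ) 1) :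
    ∑' n : ℕ, (1 - lam) * (θ + lam * n) ^ n / n.factorial * Real.exp (-(θ + lam * n))
    = 1 := by
  obtain ⟨hl0, hl1⟩ := hlam
  set x := lam * Real.exp (-lam) with hxdef
  have hx0 : 0 < x := by positivity
  have hxe : Real.exp 1 * x < 1 := by
    have hxlt : x < Real.exp (-1) := by
      have h2 := te_mono (Set.mem_Icc.mpr ⟨hl0.le, hl1.le⟩)
        (Set.mem_Icc.mpr ⟨zero_le_one, le_rfl⟩) hl1
      simpa using h2
    calc Real.exp 1 * x < Real.exp 1 * Real.exp (-1) :=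
          mul_lt_mul_of_pos_left hxlt (Real.exp_pos 1)
      _ = 1 := by rw [← Real.exp_add]; norm_num
  have hu : DF x 0 = lam := DF_at_lam hl0 hl1
  set α := θ / lam with hαdef
  have hα0 : (0:ℝ) ≤ α := by positivity
  have hG := GF_closed hx0 hxe (by rw [hu]; exact hl1) hα0
  rw [hu] at hG
  have hterm : ∀ n : ℕ, (1 - lam) * (θ + lam * n) ^ n / n.factorial * Real.exp (-(θ + lam * n))
      = ((1 - lam) * Real.exp (-θ)) * Gf x α n := by
    intro n
    unfold Gf
    have hlne : lam ≠ 0 := hl0.ne'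
    have h1 : θ + lam * n = lam * (α + n) := by
      rw [hαdef]
      field_simp
    have h2 : (α + (n:ℝ))^n * x^n = (θ + lam * n)^n * Real.exp (-lam)^n := by
      rw [hxdef, h1, mul_pow lam (Real.exp (-lam)) n, mul_pow lam (α+(n:ℝ)) n]
      ring
    have h3 : Real.exp (-(θ + lam * n)) = Real.exp (-θ) * Real.exp (-lam)^n := by
      rw [← Real.exp_nat_mul, ← Real.exp_add]
      congr 1
      push_cast
      ring
    rw [h3]
    calc (1 - lam) * (θ + lam * n)^n / n.factorial * (Real.exp (-θ) * Real.exp (-lam)^n)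
        = ((1-lam) * Real.exp (-θ)) * (((θ + lam*n)^n * Real.exp (-lam)^n) / n.factorial) := by
          ring
      _ = ((1-lam) * Real.exp (-θ)) * ((α+(n:ℝ))^n * x^n / n.factorial) := by rw [← h2]
  rw [tsum_congr hterm, tsum_mul_left]
  have hGF : ∑' n, Gf x α n = GF x α := rfl
  rw [hGF, hG]
  have h5 : α * lam = θ := by
    rw [hαdef]
    field_simp
  rw [h5]
  have h4 : (1:ℝ) - lam ≠ 0 := by linarith
  rw [Real.exp_neg]
  field_simp
end

section
/- Let λ ∈ (0,1), θ ≥ 0, m ≥ 2, and n ≥ 0. Then ∑ over m-tuples (n_1,...,n_m) of nonnegative integers with n_1+⋯+n_m = n of ∏_{k=1}^m (1-λ)(θ/m + λn_k)^{n_k}/n_k! · e^{-(θ/m + λn_k)} equals (1-λ)^m (θ + λn + λ·α(m-1))^n / n! · e^{-(θ+λn)}, where (θ + λn + λα(m-1))^n is expanded by the binomial theorem with the symbol α^ℓ(m-1) replaced by C(m+ℓ-2, ℓ)·ℓ!. -/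
open Finset

private lemma W_succ (n : ℕ) (f : ℕ → ℝ) :
    ∑ k ∈ range (n+2), (-1:ℝ)^k * ((n+1).choose k) * f k
    = ∑ k ∈ range (n+1), (-1:ℝ)^k * (n.choose k) * (f k - f (k+1)) := by
  rw [Finset.sum_range_succ' _ (n+1)]
  have h1 : ∀ k, (-1:ℝ)^(k+1) * ((n+1).choose (k+1)) * f (k+1)
      = -((-1:ℝ)^k * (n.choose k) * f (k+1)) - (-1:ℝ)^k * (n.choose (k+1)) * f (k+1) := by
    intro k
    rw [Nat.choose_succ_succ]
    push_cast
    ring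
  rw [Finset.sum_congr rfl fun k _ => h1 k, Finset.sum_sub_distrib]
  have h2 : ∑ k ∈ range (n+1), (-1:ℝ)^k * (n.choose (k+1)) * f (k+1)
      = ∑ k ∈ range (n+1), -((-1:ℝ)^(k+1) * (n.choose (k+1)) * f (k+1)) := by
    apply Finset.sum_congr rfl; intro k _; ring
  rw [h2, Finset.sum_neg_distrib]
  have h3 : ∑ k ∈ range (n+1), (-1:ℝ)^(k+1) * (n.choose (k+1)) * f (k+1)
      = ∑ k ∈ range (n+1), (-1:ℝ)^k * (n.choose k) * f k - (-1:ℝ)^0 * (n.choose 0) * f 0 := by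
    rw [Finset.sum_range_succ' (fun k => (-1:ℝ)^k * (n.choose k) * f k) n]
    have : (-1:ℝ)^(n+1) * (n.choose (n+1)) * f (n+1) = 0 := by
      simp [Nat.choose_succ_self]
    rw [Finset.sum_range_succ, this]
    ring
  rw [Finset.sum_neg_distrib, h3]
  simp only [mul_sub, Finset.sum_sub_distrib]
  simp only [Nat.choose_zero_right, Nat.cast_one, pow_zero]
  ring

private lemma diff_pow (x lam : ℝ) (j k : ℕ) :
    (x + lam*k)^j - (x + lam*((k+1:ℕ):ℝ))^j
    = -∑ i ∈ range j, (j.choose i : ℝ) * lam^(j-i) * (x + lam*k)^i := by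
  have h : x + lam*((k+1:ℕ):ℝ) = (x + lam*k) + lam := by push_cast; ring
  rw [h]
  generalize x + lam*(k:ℝ) = A
  rw [add_pow, Finset.sum_range_succ]
  simp only [Nat.sub_self, pow_zero, Nat.choose_self, Nat.cast_one, mul_one]
  have hS : ∑ i ∈ range j, A^i * lam^(j-i) * (j.choose i : ℝ)
      = ∑ i ∈ range j, (j.choose i:ℝ) * lam^(j-i) * A^i :=
    Finset.sum_congr rfl (by intros; ring)
  rw [hS]; ring

private lemma W_lt : ∀ n, ∀ j < n, ∀ x lam : ℝ,
    ∑ k ∈ range (n+1), (-1:ℝ)^k * (n.choose k) * (x + lam*k)^j = 0 := by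
  intro n
  induction n with
  | zero => intro j hj; omega
  | succ n ih =>
    intro j hj x lam
    rw [show n+1+1 = n+2 from rfl, W_succ n (fun k => (x + lam*k)^j)]
    have : ∀ k ∈ range (n+1), (-1:ℝ)^k * (n.choose k) * ((x + lam*k)^j - (x + lam*((k+1:ℕ):ℝ))^j)
        = ∑ i ∈ range j, -((j.choose i : ℝ) * lam^(j-i) * ((-1:ℝ)^k * (n.choose k) * (x + lam*k)^i)) := by
      intro k _
      rw [diff_pow, mul_neg, Finset.mul_sum, ← Finset.sum_neg_distrib]
      apply Finset.sum_congr rfl; intro i _; ring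
    rw [Finset.sum_congr rfl this, Finset.sum_comm]
    apply Finset.sum_eq_zero
    intro i hi
    rw [Finset.sum_neg_distrib, ← Finset.mul_sum, ih i (by have := mem_range.mp hi; omega) x lam]
    ring

private lemma W_eq : ∀ (n : ℕ) (x lam : ℝ),
    ∑ k ∈ range (n+1), (-1:ℝ)^k * (n.choose k) * (x + lam*k)^n
    = (-1:ℝ)^n * n.factorial * lam^n := by
  intro n
  induction n with
  | zero => intro x lam; simp
  | succ n ih =>
    intro x lam
    rw [show n+1+1 = n+2 from rfl, W_succ n (fun k => (x + lam*k)^(n+1))]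
    have : ∀ k ∈ range (n+1), (-1:ℝ)^k * (n.choose k) * ((x + lam*k)^(n+1) - (x + lam*((k+1:ℕ):ℝ))^(n+1))
        = ∑ i ∈ range (n+1), -(((n+1).choose i : ℝ) * lam^(n+1-i) * ((-1:ℝ)^k * (n.choose k) * (x + lam*k)^i)) := by
      intro k _
      rw [diff_pow, mul_neg, Finset.mul_sum, ← Finset.sum_neg_distrib]
      apply Finset.sum_congr rfl; intro i _; ring
    rw [Finset.sum_congr rfl this, Finset.sum_comm]
    have hz : ∀ i ∈ range n, (∑ k ∈ range (n+1), -(((n+1).choose i : ℝ) * lam^(n+1-i) * ((-1:ℝ)^k * (n.choose k) * (x + lam*k)^i))) = 0 := by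
      intro i hi
      rw [Finset.sum_neg_distrib, ← Finset.mul_sum, W_lt n i (mem_range.mp hi) x lam]
      ring
    rw [Finset.sum_range_succ, Finset.sum_eq_zero hz, zero_add,
      Finset.sum_neg_distrib, ← Finset.mul_sum, ih x lam]
    have h1 : ((n+1).choose n : ℝ) = (n+1 : ℝ) := by
      rw [Nat.choose_succ_self_right]; push_cast; ring
    rw [h1]
    have h2 : (n+1:ℕ) - n = 1 := by omega
    rw [h2]
    push_cast [Nat.factorial_succ]
    ring

private noncomputable def PP (lam x : ℝ) (n : ℕ) (y : ℝ) : ℝ :=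
  ∑ k ∈ range (n+1), (n.choose k : ℝ) * (x + lam*k)^k * (y + lam*((n-k : ℕ)))^(n-k)

private noncomputable def QQ (lam x : ℝ) (n : ℕ) (y : ℝ) : ℝ :=
  ∑ l ∈ range (n+1), (n.descFactorial l : ℝ) * lam^l * (x + y + lam*n)^(n-l)

private lemma hasDerivAt_PP (lam x : ℝ) (n : ℕ) (y : ℝ) :
    HasDerivAt (PP lam x (n+1)) ((n+1) * PP lam x n (y+lam)) y := by
  have h : ∀ k ∈ range (n+1+1), HasDerivAt
      (fun y => ((n+1).choose k : ℝ) * (x + lam*k)^k * (y + lam*((n+1-k : ℕ)))^(n+1-k))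
      (((n+1).choose k : ℝ) * (x + lam*k)^k * (((n+1-k : ℕ) : ℝ) * (y + lam*((n+1-k : ℕ)))^(n+1-k-1) * 1)) y := by
    intro k _
    simpa using (((hasDerivAt_id y).add_const (lam*((n+1-k : ℕ) : ℝ))).pow (n+1-k)).const_mul
      (((n+1).choose k : ℝ) * (x + lam*k)^k)
  have hsum := HasDerivAt.fun_sum h
  have heq : ∑ k ∈ range (n+1+1), ((n+1).choose k : ℝ) * (x + lam*k)^k *
      (((n+1-k : ℕ) : ℝ) * (y + lam*((n+1-k : ℕ)))^(n+1-k-1) * 1)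
      = (n+1) * PP lam x n (y+lam) := by
    rw [Finset.sum_range_succ]
    simp only [Nat.sub_self, Nat.cast_zero, pow_zero, zero_mul, mul_zero, mul_one, zero_add,
      CharP.cast_eq_zero, add_zero]
    rw [PP, Finset.mul_sum]
    apply Finset.sum_congr rfl
    intro k hk
    have hk' : k ≤ n := by have := mem_range.mp hk; omega
    have h1 : n+1-k-1 = n-k := by omega
    have h2 : ((n+1-k : ℕ) : ℝ) = ((n-k : ℕ) : ℝ) + 1 := by
      have : n+1-k = (n-k)+1 := by omega
      rw [this]; push_cast; ring
    have h3 : (((n+1).choose k : ℝ)) * ((n+1-k : ℕ) : ℝ) = (n+1 : ℝ) * (n.choose k : ℝ) := by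
      have := Nat.choose_mul_succ_eq n k
      have h4 : ((n.choose k * (n+1) : ℕ) : ℝ) = (((n+1).choose k * (n+1-k) : ℕ) : ℝ) := by rw [this]
      push_cast at h4
      push_cast
      linarith
    rw [h1, h2]
    have h5 : y + lam * (((n-k : ℕ) : ℝ) + 1) = (y + lam) + lam * ((n-k : ℕ) : ℝ) := by ring
    rw [h5]
    rw [h2] at h3
    push_cast at h3 ⊢
    linear_combination ((x + lam*(k:ℝ))^k * ((y + lam) + lam*((n-k : ℕ):ℝ))^(n-k)) * h3
  rw [heq] at hsum
  exact hsum

private lemma hasDerivAt_QQ (lam x : ℝ) (n : ℕ) (y : ℝ) :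
    HasDerivAt (QQ lam x (n+1)) ((n+1) * QQ lam x n (y+lam)) y := by
  have h : ∀ l ∈ range (n+1+1), HasDerivAt
      (fun y => ((n+1).descFactorial l : ℝ) * lam^l * (x + y + lam*((n+1 : ℕ)))^(n+1-l))
      (((n+1).descFactorial l : ℝ) * lam^l * (((n+1-l : ℕ) : ℝ) * (x + y + lam*((n+1:ℕ)))^(n+1-l-1) * 1)) y := by
    intro l _
    have hb : HasDerivAt (fun y : ℝ => x + y + lam*((n+1:ℕ):ℝ)) 1 y := by
      simpa using ((hasDerivAt_id y).const_add x).add_const (lam*((n+1:ℕ):ℝ))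
    simpa using (hb.pow (n+1-l)).const_mul (((n+1).descFactorial l : ℝ) * lam^l)
  have hsum := HasDerivAt.fun_sum h
  have heq : ∑ l ∈ range (n+1+1), ((n+1).descFactorial l : ℝ) * lam^l *
      (((n+1-l : ℕ) : ℝ) * (x + y + lam*((n+1:ℕ)))^(n+1-l-1) * 1)
      = (n+1) * QQ lam x n (y+lam) := by
    rw [Finset.sum_range_succ]
    simp only [Nat.sub_self, Nat.cast_zero, zero_mul, mul_zero, add_zero]
    rw [QQ, Finset.mul_sum]
    apply Finset.sum_congr rfl
    intro l hl
    have hl' : l ≤ n := by have := mem_range.mp hl; omega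
    have h1 : n+1-l-1 = n-l := by omega
    have h3 : (((n+1).descFactorial l : ℝ)) * ((n+1-l : ℕ) : ℝ) = (n+1 : ℝ) * (n.descFactorial l : ℝ) := by
      have e1 : (n+1).descFactorial l * (n+1-l) = (n+1).descFactorial (l+1) := by
        rw [Nat.descFactorial_succ, Nat.mul_comm]
      have e2 : (n+1).descFactorial (l+1) = (n+1) * n.descFactorial l := Nat.succ_descFactorial_succ n l
      have : (((n+1).descFactorial l * (n+1-l) : ℕ) : ℝ) = (((n+1) * n.descFactorial l : ℕ) : ℝ) := by
        rw [e1, e2]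
      push_cast at this
      push_cast
      linarith
    have h4 : x + y + lam * ((n+1:ℕ):ℝ) = x + (y + lam) + lam * (n:ℝ) := by push_cast; ring
    rw [h1, h4]
    linear_combination (lam^l * (x + (y+lam) + lam*(n:ℝ))^(n-l)) * h3
  rw [heq] at hsum
  have : QQ lam x (n+1) = fun y => ∑ l ∈ range (n+1+1),
      ((n+1).descFactorial l : ℝ) * lam^l * (x + y + lam*((n+1 : ℕ)))^(n+1-l) := by
    funext z; rw [QQ]
  rw [this]
  exact hsum

private lemma PP_anchor (lam x : ℝ) (n : ℕ) :
    PP lam x (n+1) (-(x + lam*((n+1:ℕ)))) = ((n+1).factorial : ℝ) * lam^(n+1) := by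
  have key : ∀ k ∈ range (n+1+1),
      ((n+1).choose k : ℝ) * (x + lam*k)^k * ((-(x + lam*((n+1:ℕ)))) + lam*((n+1-k : ℕ)))^(n+1-k)
      = (-1:ℝ)^(n+1) * ((-1:ℝ)^k * ((n+1).choose k) * (x + lam*k)^(n+1)) := by
    intro k hk
    have hk' : k ≤ n+1 := by have := mem_range.mp hk; omega
    have h1 : ((-(x + lam*((n+1:ℕ)))) + lam*((n+1-k : ℕ) : ℝ)) = -(x + lam*k) := by
      rw [Nat.cast_sub hk']; push_cast; ring
    rw [h1, neg_pow]
    have h2 : (x + lam*(k:ℝ))^k * (x + lam*k)^(n+1-k) = (x+lam*k)^(n+1) := by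
      rw [← pow_add, show k + (n+1-k) = n+1 from by omega]
    have hkk : (-1:ℝ)^k * (-1)^k = 1 := by
      rw [← pow_add, ← two_mul]; simp [pow_mul]
    have h3 : (-1:ℝ)^(n+1-k) = (-1:ℝ)^(n+1) * (-1:ℝ)^k := by
      calc (-1:ℝ)^(n+1-k) = (-1)^(n+1-k) * ((-1)^k * (-1)^k) := by rw [hkk, mul_one]
        _ = ((-1)^(n+1-k) * (-1)^k) * (-1)^k := by ring
        _ = (-1:ℝ)^(n+1) * (-1)^k := by
            rw [← pow_add, show n+1-k+k = n+1 from by omega]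
    rw [h3]
    linear_combination (((n+1).choose k : ℝ) * (-1:ℝ)^(n+1) * (-1:ℝ)^k) * h2
  rw [PP, Finset.sum_congr rfl key, ← Finset.mul_sum, W_eq (n+1) x lam]
  have hkk : (-1:ℝ)^(n+1) * (-1)^(n+1) = 1 := by
    rw [← pow_add, ← two_mul]; simp [pow_mul]
  linear_combination (((n+1).factorial : ℝ) * lam^(n+1)) * hkk

private lemma QQ_anchor (lam x : ℝ) (n : ℕ) :
    QQ lam x (n+1) (-(x + lam*((n+1:ℕ)))) = ((n+1).factorial : ℝ) * lam^(n+1) := by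
  rw [QQ, Finset.sum_range_succ]
  have h0 : x + (-(x + lam*((n+1:ℕ)))) + lam*((n+1:ℕ):ℝ) = 0 := by push_cast; ring
  have hz : ∀ l ∈ range (n+1), ((n+1).descFactorial l : ℝ) * lam^l *
      (x + (-(x + lam*((n+1:ℕ)))) + lam*((n+1:ℕ)))^(n+1-l) = 0 := by
    intro l hl
    have : n+1-l ≠ 0 := by have := mem_range.mp hl; omega
    rw [h0, zero_pow this, mul_zero]
  rw [Finset.sum_eq_zero hz, zero_add, h0, Nat.sub_self, pow_zero, mul_one,
    Nat.descFactorial_self]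

private lemma PQ (lam x : ℝ) : ∀ (n : ℕ) (y : ℝ), PP lam x n y = QQ lam x n y := by
  intro n
  induction n with
  | zero => intro y; simp [PP, QQ]
  | succ n ih =>
    have hd : ∀ y : ℝ, deriv (fun y => PP lam x (n+1) y - QQ lam x (n+1) y) y = 0 := by
      intro y
      have := (hasDerivAt_PP lam x n y).sub (hasDerivAt_QQ lam x n y)
      rw [ih (y+lam), sub_self] at this
      exact this.deriv
    have hdiff : Differentiable ℝ (fun y => PP lam x (n+1) y - QQ lam x (n+1) y) := by
      intro y
      exact ((hasDerivAt_PP lam x n y).sub (hasDerivAt_QQ lam x n y)).differentiableAt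
    intro y
    have := is_const_of_deriv_eq_zero hdiff hd y (-(x + lam*((n+1:ℕ))))
    have h2 : PP lam x (n+1) (-(x + lam*((n+1:ℕ)))) - QQ lam x (n+1) (-(x + lam*((n+1:ℕ)))) = 0 := by
      rw [PP_anchor, QQ_anchor, sub_self]
    rw [h2] at this
    linarith [this]

private noncomputable def sing (lam x : ℝ) (a : ℕ) : ℝ := (x + lam*a)^a / a.factorial

private noncomputable def BB (lam : ℝ) (c : ℕ) (y : ℝ) (b : ℕ) : ℝ :=
  ∑ l ∈ range (b+1), lam^l * ((c+l).choose l : ℝ) * sing lam (y + lam*l) (b - l)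

private lemma conv2 (lam x y : ℝ) (n : ℕ) :
    ∑ k ∈ range (n+1), sing lam x k * sing lam y (n-k) = BB lam 0 (x+y) n := by
  have hL : ∑ k ∈ range (n+1), sing lam x k * sing lam y (n-k)
      = PP lam x n y / n.factorial := by
    rw [PP, Finset.sum_div]
    apply Finset.sum_congr rfl
    intro k hk
    have hk' : k ≤ n := by have := mem_range.mp hk; omega
    rw [sing, sing, Nat.cast_sub hk']
    rw [eq_div_iff (by exact_mod_cast Nat.factorial_ne_zero n)]
    have hfact : (n.choose k : ℝ) * (k.factorial : ℝ) * ((n-k).factorial : ℝ) = (n.factorial : ℝ) := by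
      exact_mod_cast congrArg (Nat.cast : ℕ → ℝ) (Nat.choose_mul_factorial_mul_factorial hk')
    field_simp
    linear_combination (-(x + lam*(k:ℝ))^k * (y + lam*((n:ℝ) - (k:ℝ)))^(n-k)) * hfact
  have hR : BB lam 0 (x+y) n = QQ lam x n y / n.factorial := by
    rw [BB, QQ, Finset.sum_div]
    apply Finset.sum_congr rfl
    intro l hl
    have hl' : l ≤ n := by have := mem_range.mp hl; omega
    rw [sing]
    have h1 : x + y + lam*(l:ℝ) + lam*((n-l : ℕ):ℝ) = x + y + lam*(n:ℝ) := by
      rw [Nat.cast_sub hl']; ring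
    rw [h1]
    have hfact : (n.descFactorial l : ℝ) * ((n-l).factorial : ℝ) = (n.factorial : ℝ) := by
      have := Nat.factorial_mul_descFactorial hl'
      exact_mod_cast congrArg (Nat.cast : ℕ → ℝ) (by rw [← this]; ring)
    rw [show ((0+l).choose l) = 1 from by simp, Nat.cast_one, mul_one, ← mul_div_assoc]
    rw [div_eq_div_iff (by exact_mod_cast Nat.factorial_ne_zero (n-l))
      (by exact_mod_cast Nat.factorial_ne_zero n)]
    linear_combination (-lam^l * (x + y + lam*(n:ℝ))^(n-l)) * hfact
  rw [hL, hR, PQ]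

private lemma tri_swap (f : ℕ → ℕ → ℝ) (n : ℕ) :
    ∑ k ∈ range (n+1), ∑ l ∈ range (n+1-k), f k l
    = ∑ l ∈ range (n+1), ∑ k ∈ range (n+1-l), f k l := by
  rw [Finset.sum_sigma' (range (n+1)) (fun k => range (n+1-k)) (fun k l => f k l),
    Finset.sum_sigma' (range (n+1)) (fun l => range (n+1-l)) (fun l k => f k l)]
  apply Finset.sum_nbij' (fun p => ⟨p.2, p.1⟩) (fun p => ⟨p.2, p.1⟩) <;>
    simp only [Finset.mem_sigma, Finset.mem_range] <;> (intros; first | omega | rfl | trivial)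

private lemma tri_group (g : ℕ → ℕ → ℝ) (n : ℕ) :
    ∑ l ∈ range (n+1), ∑ j ∈ range (n+1-l), g l j
    = ∑ s ∈ range (n+1), ∑ l ∈ range (s+1), g l (s-l) := by
  rw [Finset.sum_sigma' (range (n+1)) (fun l => range (n+1-l)) (fun l j => g l j),
    Finset.sum_sigma' (range (n+1)) (fun s => range (s+1)) (fun s l => g l (s-l))]
  apply Finset.sum_nbij' (fun p => (⟨p.1+p.2, p.1⟩ : Σ _ : ℕ, ℕ)) (fun p => ⟨p.2, p.1-p.2⟩)
  · simp only [Finset.mem_sigma, Finset.mem_range]; intros; omega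
  · simp only [Finset.mem_sigma, Finset.mem_range]; intros; omega
  · simp only [Finset.mem_sigma, Finset.mem_range]
    intro a _; exact Sigma.ext (by rfl) (by simp)
  · simp only [Finset.mem_sigma, Finset.mem_range]
    intro a ha; exact Sigma.ext (by simp; omega) (by simp)
  · simp only [Finset.mem_sigma, Finset.mem_range]
    intro a _
    congr 1
    omega

private lemma hockey (c s : ℕ) :
    ∑ l ∈ range (s+1), ((c+l).choose l : ℝ) = ((c+1+s).choose s : ℝ) := by
  have hnat : ∑ l ∈ range (s+1), (c+l).choose l = (c+1+s).choose s := by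
    have h1 : ∀ l ∈ range (s+1), (c+l).choose l = (c+l).choose c := by
      intro l _; exact (Nat.choose_symm_add).symm
    rw [Finset.sum_congr rfl h1]
    have h2 : ∑ i ∈ Ico c (c+s+1), i.choose c = ∑ l ∈ range (s+1), (c+l).choose c := by
      rw [Finset.sum_Ico_eq_sum_range, show c+s+1-c = s+1 from by omega]
    rw [← h2, Finset.Ico_add_one_right_eq_Icc, Nat.sum_Icc_choose,
      show c+s+1 = c+1+s from by omega]
    exact Nat.choose_symm_add
  exact_mod_cast congrArg (Nat.cast : ℕ → ℝ) hnat

private lemma convB (lam x y : ℝ) (c n : ℕ) :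
    ∑ k ∈ range (n+1), sing lam x k * BB lam c y (n-k) = BB lam (c+1) (x+y) n := by
  have step1 : ∀ k ∈ range (n+1), sing lam x k * BB lam c y (n-k)
      = ∑ l ∈ range (n+1-k), sing lam x k * (lam^l * ((c+l).choose l : ℝ) * sing lam (y + lam*l) (n-k-l)) := by
    intro k hk
    rw [BB, Finset.mul_sum]
    rw [show (n-k)+1 = n+1-k from by have := mem_range.mp hk; omega]
  rw [Finset.sum_congr rfl step1, tri_swap]
  have step3 : ∀ l ∈ range (n+1),
      ∑ k ∈ range (n+1-l), sing lam x k * (lam^l * ((c+l).choose l : ℝ) * sing lam (y + lam*l) (n-k-l))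
      = ∑ j ∈ range (n+1-l), lam^l * ((c+l).choose l : ℝ) * (lam^j * sing lam (x+y+lam*l+lam*j) (n-l-j)) := by
    intro l hl
    have hl' : l ≤ n := by have := mem_range.mp hl; omega
    have e1 : ∑ k ∈ range (n+1-l), sing lam x k * (lam^l * ((c+l).choose l : ℝ) * sing lam (y + lam*l) (n-k-l))
        = lam^l * ((c+l).choose l : ℝ) * ∑ k ∈ range ((n-l)+1), sing lam x k * sing lam (y + lam*l) ((n-l)-k) := by
      rw [Finset.mul_sum]
      rw [show (n-l)+1 = n+1-l from by omega]
      apply Finset.sum_congr rfl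
      intro k hk
      rw [show n-l-k = n-k-l from by omega]
      ring
    rw [e1, conv2, BB]
    rw [Finset.mul_sum]
    rw [show (n-l)+1 = n+1-l from by omega]
    apply Finset.sum_congr rfl
    intro j hj
    have : x + (y + lam*l) + lam*j = x+y+lam*l+lam*j := by ring
    rw [this]
    rw [show (0+j).choose j = 1 from by simp]
    push_cast
    ring
  rw [Finset.sum_congr rfl step3, tri_group, BB]
  apply Finset.sum_congr rfl
  intro s hs
  have hs' : s ≤ n := by have := mem_range.mp hs; omega
  have inner : ∀ l ∈ range (s+1),
      lam^l * ((c+l).choose l : ℝ) * (lam^(s-l) * sing lam (x+y+lam*l+lam*((s-l:ℕ):ℝ)) (n-l-(s-l)))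
      = ((c+l).choose l : ℝ) * (lam^s * sing lam (x+y+lam*s) (n-s)) := by
    intro l hl
    have hl' : l ≤ s := by have := mem_range.mp hl; omega
    have e2 : x+y+lam*l+lam*((s-l : ℕ):ℝ) = x+y+lam*(s:ℝ) := by
      rw [Nat.cast_sub hl']; ring
    rw [show n-l-(s-l) = n-s from by omega, e2]
    rw [show lam^l * ((c+l).choose l : ℝ) * (lam^(s-l) * sing lam (x+y+lam*(s:ℝ)) (n-s))
      = ((c+l).choose l : ℝ) * ((lam^l * lam^(s-l)) * sing lam (x+y+lam*(s:ℝ)) (n-s)) from by ring]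
    rw [← pow_add, show l + (s-l) = s from by omega]
  rw [Finset.sum_congr rfl inner, ← Finset.sum_mul, hockey]
  ring

private lemma tuple_succ_sum (g : ℕ → ℝ) (m n : ℕ) :
    ∑ f ∈ Finset.Nat.antidiagonalTuple (m+1) n, ∏ i, g (f i)
    = ∑ k ∈ range (n+1), g k * ∑ f ∈ Finset.Nat.antidiagonalTuple m (n-k), ∏ i, g (f i) := by
  rw [← Finset.Nat.sum_antidiagonal_eq_sum_range_succ_mk
    (fun p => g p.1 * ∑ f ∈ Finset.Nat.antidiagonalTuple m p.2, ∏ i, g (f i)) n]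
  have : ∀ p ∈ Finset.HasAntidiagonal.antidiagonal n,
      g p.1 * ∑ f ∈ Finset.Nat.antidiagonalTuple m p.2, ∏ i, g (f i)
      = ∑ f ∈ Finset.Nat.antidiagonalTuple m p.2, g p.1 * ∏ i, g (f i) := by
    intro p _; rw [Finset.mul_sum]
  rw [Finset.sum_congr rfl this, Finset.sum_sigma']
  apply Finset.sum_nbij' (i := fun f => (⟨(f 0, ∑ i : Fin m, f i.succ), Fin.tail f⟩ :
      Σ _ : ℕ × ℕ, (Fin m → ℕ))) (j := fun q => Fin.cons q.1.1 q.2)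
  · intro f hf
    rw [Finset.Nat.mem_antidiagonalTuple] at hf
    rw [Finset.mem_sigma, Finset.HasAntidiagonal.mem_antidiagonal]
    constructor
    · rw [← hf, Fin.sum_univ_succ]
    · exact Finset.Nat.mem_antidiagonalTuple.mpr rfl
  · intro q hq
    rw [Finset.mem_sigma, Finset.HasAntidiagonal.mem_antidiagonal] at hq
    rw [Finset.Nat.mem_antidiagonalTuple, Fin.sum_univ_succ, Fin.cons_zero]
    have h2 := Finset.Nat.mem_antidiagonalTuple.mp hq.2
    simp only [Fin.cons_succ]
    rw [h2, hq.1]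
  · intro f _; exact Fin.cons_self_tail f
  · intro q hq
    rw [Finset.mem_sigma, Finset.HasAntidiagonal.mem_antidiagonal] at hq
    have h2 := Finset.Nat.mem_antidiagonalTuple.mp hq.2
    refine Sigma.ext ?_ ?_
    · simp only [Fin.cons_zero]
      rw [show (∑ i : Fin m, (Fin.cons q.1.1 q.2 : Fin (m+1) → ℕ) i.succ) = ∑ i, q.2 i from by
        simp only [Fin.cons_succ]]
      rw [h2]
    · simp only [Fin.tail_cons]; exact HEq.rfl
  · intro f hf
    rw [Fin.prod_univ_succ]
    rfl

private lemma tuple_sum (lam x : ℝ) : ∀ (t n : ℕ),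
    ∑ f ∈ Finset.Nat.antidiagonalTuple (t+2) n, ∏ i, sing lam x (f i)
    = BB lam t (((t+2 : ℕ) : ℝ) * x) n := by
  intro t
  induction t with
  | zero =>
    intro n
    rw [Finset.Nat.antidiagonalTuple_two, Finset.sum_map]
    have : ∀ p ∈ Finset.HasAntidiagonal.antidiagonal n,
        (∏ i, sing lam x (((piFinTwoEquiv fun _ => ℕ).symm.toEmbedding p) i))
        = sing lam x p.1 * sing lam x p.2 := by
      intro p _
      rw [Fin.prod_univ_two]
      rfl
    rw [Finset.sum_congr rfl this,
      Finset.Nat.sum_antidiagonal_eq_sum_range_succ_mk (fun p => sing lam x p.1 * sing lam x p.2) n,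
      conv2]
    rw [show ((0+2:ℕ):ℝ) * x = x + x from by push_cast; ring]
  | succ t ih =>
    intro n
    rw [show t+1+2 = (t+2)+1 from by omega, tuple_succ_sum (sing lam x) (t+2) n]
    have : ∀ k ∈ range (n+1), sing lam x k *
        (∑ f ∈ Finset.Nat.antidiagonalTuple (t+2) (n-k), ∏ i, sing lam x (f i))
        = sing lam x k * BB lam t (((t+2:ℕ):ℝ) * x) (n-k) := by
      intro k _; rw [ih]
    rw [Finset.sum_congr rfl this, convB]
    rw [show x + ((t+2:ℕ):ℝ) * x = ((t+1+2:ℕ):ℝ) * x from by push_cast; ring]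

private lemma BB_rhs (lam θ : ℝ) (t n : ℕ) :
    BB lam t θ n = (∑ k ∈ range (n+1), (n.choose k : ℝ) * (θ + lam*n)^k *
      lam^(n-k) * (((t+2)+n-k-2).factorial / t.factorial : ℝ)) / n.factorial := by
  rw [show (∑ k ∈ range (n+1), (n.choose k : ℝ) * (θ + lam*n)^k *
      lam^(n-k) * (((t+2)+n-k-2).factorial / t.factorial : ℝ))
    = ∑ l ∈ range (n+1), (n.choose (n-l) : ℝ) * (θ + lam*n)^(n-l) *
      lam^(n-(n-l)) * (((t+2)+n-(n-l)-2).factorial / t.factorial : ℝ) from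
    (Finset.sum_range_reflect _ (n+1)).symm]
  rw [BB, Finset.sum_div]
  apply Finset.sum_congr rfl
  intro l hl
  have hl' : l ≤ n := by have := mem_range.mp hl; omega
  rw [show n - (n-l) = l from by omega, show (t+2)+n-(n-l)-2 = t+l from by omega,
    Nat.choose_symm hl', sing,
    show θ + lam*(l:ℝ) + lam*((n-l : ℕ):ℝ) = θ + lam*(n:ℝ) from by
      rw [Nat.cast_sub hl']; ring]
  have hnat : (t+l).choose l * t.factorial * n.factorial
      = n.choose l * (t+l).factorial * (n-l).factorial := by
    have a : (t+l).choose l * l.factorial * t.factorial = (t+l).factorial := by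
      have := Nat.choose_mul_factorial_mul_factorial (show l ≤ t+l from by omega)
      rwa [show t+l-l = t from by omega] at this
    have b : n.choose l * l.factorial * (n-l).factorial = n.factorial := by
      exact Nat.choose_mul_factorial_mul_factorial hl'
    calc (t+l).choose l * t.factorial * n.factorial
        = (t+l).choose l * t.factorial * (n.choose l * l.factorial * (n-l).factorial) := by rw [b]
      _ = n.choose l * ((t+l).choose l * l.factorial * t.factorial) * (n-l).factorial := by ring
      _ = n.choose l * (t+l).factorial * (n-l).factorial := by rw [a]
  have hcast : ((t+l).choose l : ℝ) * (t.factorial : ℝ) * (n.factorial : ℝ)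
      = (n.choose l : ℝ) * ((t+l).factorial : ℝ) * ((n-l).factorial : ℝ) := by
    exact_mod_cast congrArg (Nat.cast : ℕ → ℝ) hnat
  have h1 : ((n-l).factorial : ℝ) ≠ 0 := by exact_mod_cast Nat.factorial_ne_zero _
  have h2 : (n.factorial : ℝ) ≠ 0 := by exact_mod_cast Nat.factorial_ne_zero _
  have h3 : (t.factorial : ℝ) ≠ 0 := by exact_mod_cast Nat.factorial_ne_zero _
  field_simp
  linear_combination (lam^l * (θ + lam*(n:ℝ))^(n-l)) * hcast

theorem stmt11 (θ lam : ℝ) (hθ : 0 ≤ θ) (hlam : lam ∈ Set.Ioo (0 : ℝ) 1)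
    (m : ℕ) (hm : 2 ≤ m) (n : ℕ) :
    ∑ f ∈ Finset.Nat.antidiagonalTuple m n,
      ∏ k, (1 - lam) * (θ / m + lam * f k) ^ (f k) / (f k).factorial *
        Real.exp (-(θ / m + lam * f k))
    = (1 - lam) ^ m * Real.exp (-(θ + lam * n)) / n.factorial *
        ∑ k ∈ Finset.range (n + 1), (Nat.choose n k : ℝ) * (θ + lam * n) ^ k *
          lam ^ (n - k) * ((m + n - k - 2).factorial / (m - 2).factorial : ℝ) := by
  obtain ⟨t, rfl⟩ : ∃ t, m = t+2 := ⟨m-2, by omega⟩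
  have hm0 : ((t+2 : ℕ) : ℝ) ≠ 0 := by positivity
  set x : ℝ := θ / ((t+2 : ℕ) : ℝ) with hx
  have hmx : ((t+2 : ℕ) : ℝ) * x = θ := by
    rw [hx, mul_div_cancel₀]
    exact hm0
  have hL : ∀ f ∈ Finset.Nat.antidiagonalTuple (t+2) n,
      (∏ k, (1 - lam) * (x + lam * f k) ^ (f k) / (f k).factorial *
        Real.exp (-(x + lam * f k)))
      = (1-lam)^(t+2) * Real.exp (-(θ + lam * n)) * ∏ i, sing lam x (f i) := by
    intro f hf
    have hf' := Finset.Nat.mem_antidiagonalTuple.mp hf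
    have e1 : ∀ i : Fin (t+2), (1 - lam) * (x + lam * f i) ^ (f i) / (f i).factorial *
        Real.exp (-(x + lam * f i))
        = (1-lam) * sing lam x (f i) * Real.exp (-(x + lam * f i)) := by
      intro i; rw [sing]; ring
    rw [Finset.prod_congr rfl (fun i _ => e1 i), Finset.prod_mul_distrib,
      Finset.prod_mul_distrib, ← Real.exp_sum, Finset.prod_const]
    have e2 : ∑ i : Fin (t+2), -(x + lam * (f i : ℝ)) = -(θ + lam * n) := by
      rw [Finset.sum_neg_distrib, Finset.sum_add_distrib, Finset.sum_const,
        ← Finset.mul_sum]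
      have : ∑ i : Fin (t+2), ((f i : ℝ)) = ((n : ℕ) : ℝ) := by
        rw [← hf']; push_cast; try rfl
      rw [this]
      simp only [Finset.card_univ, Fintype.card_fin, nsmul_eq_mul]
      rw [hmx]
    rw [e2]
    simp only [Finset.card_univ, Fintype.card_fin]
    ring
  rw [Finset.sum_congr rfl hL, ← Finset.mul_sum, tuple_sum, hmx, BB_rhs]
  rw [show (t+2) - 2 = t from by omega]
  ring
end

section
/- Let p(θ,λ,m;n) = (1-λ)^m(θ+λn+λα(m-1))^n/n! · e^{-(θ+λn)} be the compound Delaporte mass function (with α^ℓ(m-1) = C(m+ℓ-2,ℓ)·ℓ! in the binomial expansion). Then for all n ≥ 1: p(θ,λ,m;n) = (λ(m-1)/((1-λ)n)) · p(θ+λ, λ, m+1; n-1) + ((θ+λn)/n) · p(θ+λ, λ, m; n-1). -/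
open Finset

/-- Compound Delaporte mass function with Borel summands, with Riordan's α-symbols
expanded: `α^{n-k}(m-1) = (m+n-k-2)!/(m-2)!`. -/
noncomputable def compoundDelaporte (θ lam : ℝ) (m n : ℕ) : ℝ :=
  (1 - lam) ^ m * Real.exp (-(θ + lam * n)) / n.factorial *
    ∑ k ∈ Finset.range (n + 1), (Nat.choose n k : ℝ) * (θ + lam * n) ^ k *
      lam ^ (n - k) * ((m + n - k - 2).factorial / (m - 2).factorial : ℝ)

lemma key_sum (x y : ℝ) (m s : ℕ) (hm : 2 ≤ m) :
    ∑ k ∈ range (s + 1 + 1), (Nat.choose (s + 1) k : ℝ) * x ^ k * y ^ (s + 1 - k) *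
        ((m + (s + 1) - k - 2).factorial / (m - 2).factorial : ℝ)
    = y * ((m : ℝ) - 1) * ∑ k ∈ range (s + 1), (Nat.choose s k : ℝ) * x ^ k * y ^ (s - k) *
        ((m + 1 + s - k - 2).factorial / (m + 1 - 2).factorial : ℝ)
    + x * ∑ k ∈ range (s + 1), (Nat.choose s k : ℝ) * x ^ k * y ^ (s - k) *
        ((m + s - k - 2).factorial / (m - 2).factorial : ℝ) := by
  set A : ℕ → ℝ := fun k => x ^ k * y ^ (s + 1 - k) *
      ((m + (s + 1) - k - 2).factorial / (m - 2).factorial : ℝ) with hA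
  have hfne : ((m - 2).factorial : ℝ) ≠ 0 := by positivity
  have hmm : (m : ℝ) - 1 ≠ 0 := by
    have : (2 : ℝ) ≤ (m : ℝ) := by exact_mod_cast hm
    linarith
  have h1 : y * ((m : ℝ) - 1) * ∑ k ∈ range (s + 1), (Nat.choose s k : ℝ) * x ^ k * y ^ (s - k) *
        ((m + 1 + s - k - 2).factorial / (m + 1 - 2).factorial : ℝ)
      = ∑ k ∈ range (s + 1), (Nat.choose s k : ℝ) * A k := by
    rw [Finset.mul_sum]
    refine Finset.sum_congr rfl fun k hk => ?_
    have hks : k ≤ s := Nat.lt_succ_iff.mp (Finset.mem_range.mp hk)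
    have e1 : m + 1 + s - k - 2 = m + (s + 1) - k - 2 := by omega
    have e2 : s + 1 - k = (s - k) + 1 := by omega
    have e3 : m + 1 - 2 = (m - 2) + 1 := by omega
    have e4 : (((m - 2) + 1 : ℕ) : ℝ) = (m : ℝ) - 1 := by
      have h : (m - 2) + 1 = m - 1 := by omega
      rw [h, Nat.cast_sub (by omega)]; simp
    simp only [hA, e1, e2, e3, Nat.factorial_succ, pow_succ]
    push_cast [e4]
    field_simp
  have h2 : x * ∑ k ∈ range (s + 1), (Nat.choose s k : ℝ) * x ^ k * y ^ (s - k) *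
        ((m + s - k - 2).factorial / (m - 2).factorial : ℝ)
      = ∑ k ∈ range (s + 1), (Nat.choose s k : ℝ) * A (k + 1) := by
    rw [Finset.mul_sum]
    refine Finset.sum_congr rfl fun k hk => ?_
    have hks : k ≤ s := Nat.lt_succ_iff.mp (Finset.mem_range.mp hk)
    have e1 : m + (s + 1) - (k + 1) - 2 = m + s - k - 2 := by omega
    have e2 : s + 1 - (k + 1) = s - k := by omega
    simp only [hA, e1, e2, pow_succ]
    ring
  rw [h1, h2]
  have lhs_eq : ∑ k ∈ range (s + 1 + 1), (Nat.choose (s + 1) k : ℝ) * x ^ k * y ^ (s + 1 - k) *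
        ((m + (s + 1) - k - 2).factorial / (m - 2).factorial : ℝ)
      = ∑ k ∈ range (s + 1 + 1), (Nat.choose (s + 1) k : ℝ) * A k :=
    Finset.sum_congr rfl fun k _ => by simp only [hA]; ring
  rw [lhs_eq]
  have step : ∑ k ∈ range (s + 1 + 1), (Nat.choose (s + 1) k : ℝ) * A k
      = (∑ k ∈ range (s + 1), (Nat.choose (s + 1) (k + 1) : ℝ) * A (k + 1))
        + (Nat.choose (s + 1) 0 : ℝ) * A 0 :=
    Finset.sum_range_succ' _ (s + 1)
  rw [step]
  have split : (∑ k ∈ range (s + 1), (Nat.choose (s + 1) (k + 1) : ℝ) * A (k + 1))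
      = (∑ k ∈ range (s + 1), (Nat.choose s k : ℝ) * A (k + 1))
        + (∑ k ∈ range (s + 1), (Nat.choose s (k + 1) : ℝ) * A (k + 1)) := by
    rw [← Finset.sum_add_distrib]
    refine Finset.sum_congr rfl fun k _ => ?_
    rw [Nat.choose_succ_succ]; push_cast; ring
  rw [split]
  have tail : (∑ k ∈ range (s + 1), (Nat.choose s (k + 1) : ℝ) * A (k + 1))
      + (Nat.choose (s + 1) 0 : ℝ) * A 0
      = ∑ k ∈ range (s + 1), (Nat.choose s k : ℝ) * A k := by
    have h := Finset.sum_range_succ' (fun k => (Nat.choose s k : ℝ) * A k) (s + 1)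
    rw [Finset.sum_range_succ, Nat.choose_succ_self] at h
    simp only [Nat.cast_zero, zero_mul, add_zero, Nat.choose_zero_right, Nat.cast_one,
      one_mul] at h
    simp only [Nat.choose_zero_right, Nat.cast_one, one_mul]
    linarith [h]
  linarith [tail]

theorem stmt13 (θ lam : ℝ) (hθ : 0 ≤ θ) (hlam : lam ∈ Set.Ioo (0 : ℝ) 1)
    (m : ℕ) (hm : 2 ≤ m) (n : ℕ) (hn : 1 ≤ n) :
    compoundDelaporte θ lam m n
    = lam * ((m : ℝ) - 1) / ((1 - lam) * n) * compoundDelaporte (θ + lam) lam (m + 1) (n - 1)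
      + (θ + lam * n) / n * compoundDelaporte (θ + lam) lam m (n - 1) := by
  obtain ⟨s, rfl⟩ : ∃ s, n = s + 1 := ⟨n - 1, by omega⟩
  simp only [compoundDelaporte, Nat.add_sub_cancel]
  have hc : ((s + 1 : ℕ) : ℝ) = (s : ℝ) + 1 := by push_cast; ring
  rw [hc]
  rw [show θ + lam + lam * (s : ℝ) = θ + lam * ((s : ℝ) + 1) from by ring]
  have hfs : (((s + 1).factorial : ℕ) : ℝ) = ((s : ℝ) + 1) * (s.factorial : ℝ) := by
    rw [Nat.factorial_succ]; push_cast; ring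
  rw [hfs]
  rw [key_sum (θ + lam * ((s : ℝ) + 1)) lam m s hm]
  have h1 : (1 : ℝ) - lam ≠ 0 := by have := hlam.2; linarith
  have hs1 : ((s : ℝ) + 1) ≠ 0 := by positivity
  have hf : ((s.factorial : ℝ)) ≠ 0 := by positivity
  set A := ∑ k ∈ range (s + 1), (Nat.choose s k : ℝ) * (θ + lam * ((s : ℝ) + 1)) ^ k *
      lam ^ (s - k) * ((m + 1 + s - k - 2).factorial / (m + 1 - 2).factorial : ℝ) with hAdef
  set B := ∑ k ∈ range (s + 1), (Nat.choose s k : ℝ) * (θ + lam * ((s : ℝ) + 1)) ^ k *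
      lam ^ (s - k) * ((m + s - k - 2).factorial / (m - 2).factorial : ℝ) with hBdef
  set E := Real.exp (-(θ + lam * ((s : ℝ) + 1))) with hEdef
  field_simp
  ring
end

section
/- Let (U_j) be i.i.d. ℕ-valued random variables (U_j ≥ 1) with mass function f, and suppose a claim-number distribution family p(θ,λ;·) on ℕ₀ satisfies p(θ,λ;n) = (a + b/n)·p(θ+λ,λ;n-1) for all n ≥ 1 and all θ in a set closed under adding λ. Define q(θ,λ;n) = ∑_{m=0}^∞ P{U_1+⋯+U_m = n}·p(θ,λ;m). Then q(θ,λ;0) = p(θ,λ;0) and for all n ≥ 1, q(θ,λ;n) = ∑_{k=1}^n (a + bk/n)·f(k)·q(θ+λ,λ;n-k). -/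
/-- `conv f m n` is the `m`-fold convolution power of the mass function `f`
evaluated at `n`, i.e. `P{U₁ + ⋯ + U_m = n}`. -/
noncomputable def conv (f : ℕ → ℝ) : ℕ → ℕ → ℝ
  | 0, n => if n = 0 then 1 else 0
  | m + 1, n => ∑ k ∈ Finset.range (n + 1), f k * conv f m (n - k)

open Finset

lemma conv_zero_of_lt (f : ℕ → ℝ) (hf0 : f 0 = 0) : ∀ m n, n < m → conv f m n = 0 := by
  intro m
  induction m with
  | zero => intro n h; omega
  | succ m ih =>
    intro n h
    rw [conv]
    apply Finset.sum_eq_zero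
    intro k hk
    rw [Finset.mem_range] at hk
    rcases Nat.eq_zero_or_pos k with h0 | h1
    · simp [h0, hf0]
    · rw [ih (n - k) (by omega), mul_zero]

lemma tri_comm (n : ℕ) (F : ℕ → ℕ → ℝ) :
    ∑ k ∈ Finset.range (n + 1), ∑ j ∈ Finset.range (n - k + 1), F k j
      = ∑ j ∈ Finset.range (n + 1), ∑ k ∈ Finset.range (n - j + 1), F k j := by
  rw [Finset.sum_sigma', Finset.sum_sigma']
  refine Finset.sum_nbij' (fun p => ⟨p.2, p.1⟩) (fun p => ⟨p.2, p.1⟩) ?_ ?_ ?_ ?_ ?_ <;>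
    simp only [Finset.mem_sigma, Finset.mem_range] <;> intros <;> first | omega | trivial

lemma key (f : ℕ → ℝ) : ∀ m n : ℕ,
    ((m : ℝ) + 1) * ∑ k ∈ Finset.range (n + 1), (k : ℝ) * f k * conv f m (n - k)
      = (n : ℝ) * conv f (m + 1) n := by
  intro m
  induction m with
  | zero =>
    intro n
    have h1 : ∑ k ∈ Finset.range (n + 1), (k : ℝ) * f k * conv f 0 (n - k)
        = (n : ℝ) * f n := by
      rw [Finset.sum_eq_single n]
      · simp [conv]
      · intro k hk hkn
        rw [Finset.mem_range] at hk
        have : n - k ≠ 0 := by omega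
        simp [conv, this]
      · intro h; exact absurd (Finset.self_mem_range_succ n) h
    have h2 : conv f (0 + 1) n = f n := by
      rw [conv]
      rw [Finset.sum_eq_single n]
      · simp [conv]
      · intro k hk hkn
        rw [Finset.mem_range] at hk
        have : n - k ≠ 0 := by omega
        simp [conv, this]
      · intro h; exact absurd (Finset.self_mem_range_succ n) h
    rw [h1, h2]; push_cast; ring
  | succ m ih =>
    intro n
    set A := ∑ k ∈ Finset.range (n + 1), (k : ℝ) * f k * conv f (m + 1) (n - k) with hA
    have eA : A = ∑ j ∈ Finset.range (n + 1), f j *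
        ∑ k ∈ Finset.range (n - j + 1), (k : ℝ) * f k * conv f m (n - j - k) := by
      rw [hA]
      have h1 : ∀ k ∈ Finset.range (n + 1), (k : ℝ) * f k * conv f (m + 1) (n - k)
          = ∑ j ∈ Finset.range (n - k + 1), (k : ℝ) * f k * (f j * conv f m (n - k - j)) := by
        intro k hk
        rw [conv, Finset.mul_sum]
      rw [Finset.sum_congr rfl h1, tri_comm]
      apply Finset.sum_congr rfl
      intro j hj
      rw [Finset.mul_sum]
      apply Finset.sum_congr rfl
      intro k hk
      have hsub : n - k - j = n - j - k := by omega
      rw [hsub]; ring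
    have e1 : ((m : ℝ) + 1) * A = ∑ j ∈ Finset.range (n + 1),
        f j * (((n - j : ℕ) : ℝ) * conv f (m + 1) (n - j)) := by
      rw [eA, Finset.mul_sum]
      apply Finset.sum_congr rfl
      intro j hj
      rw [← ih (n - j)]
      ring
    have e2 : ∑ j ∈ Finset.range (n + 1),
        f j * (((n - j : ℕ) : ℝ) * conv f (m + 1) (n - j))
        = (n : ℝ) * conv f (m + 1 + 1) n - A := by
      have expand : conv f (m + 1 + 1) n
          = ∑ j ∈ Finset.range (n + 1), f j * conv f (m + 1) (n - j) := by rw [conv]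
      rw [expand, hA, Finset.mul_sum, ← Finset.sum_sub_distrib]
      apply Finset.sum_congr rfl
      intro j hj
      rw [Finset.mem_range] at hj
      have hc : ((n - j : ℕ) : ℝ) = (n : ℝ) - j := by
        rw [Nat.cast_sub (by omega)]
      rw [hc]; ring
    rw [e2] at e1
    push_cast
    linarith [e1]

theorem stmt17 (f : ℕ → ℝ) (hf0 : f 0 = 0) (hfnn : ∀ n, 0 ≤ f n) (hfsum : ∑' n, f n = 1)
    (p : ℝ → ℕ → ℝ) (a b lam θ : ℝ)
    (hrec : ∀ θ' : ℝ, ∀ n : ℕ, 1 ≤ n → p θ' n = (a + b / n) * p (θ' + lam) (n - 1)) :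
    (∑' m : ℕ, conv f m 0 * p θ m) = p θ 0 ∧
      ∀ n : ℕ, 1 ≤ n →
        (∑' m : ℕ, conv f m n * p θ m)
          = ∑ k ∈ Finset.Icc 1 n, (a + b * k / n) * f k *
              ∑' m : ℕ, conv f m (n - k) * p (θ + lam) m := by
  have hz := conv_zero_of_lt f hf0
  have tsum_eq : ∀ (g : ℕ → ℝ) (n' N : ℕ), n' < N →
      ∑' m : ℕ, conv f m n' * g m = ∑ m ∈ Finset.range N, conv f m n' * g m := by
    intro g n' N h
    apply tsum_eq_sum
    intro m hm
    rw [Finset.mem_range, not_lt] at hm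
    rw [hz m n' (by omega), zero_mul]
  constructor
  · rw [tsum_eq_single 0 ?_]
    · simp [conv]
    · intro m hm
      rw [hz m 0 (Nat.pos_of_ne_zero hm), zero_mul]
  · intro n hn
    have hn0 : (n : ℝ) ≠ 0 := Nat.cast_ne_zero.mpr (by omega)
    rw [tsum_eq (p θ) n (n + 1) (by omega), Finset.sum_range_succ']
    have h0 : conv f 0 n * p θ 0 = 0 := by
      have hne : n ≠ 0 := by omega
      simp [conv, hne]
    rw [h0, add_zero]
    have hterm : ∀ m : ℕ, conv f (m + 1) n * p θ (m + 1)
        = ∑ k ∈ Finset.range (n + 1),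
            ((a + b * k / n) * f k * conv f m (n - k)) * p (θ + lam) m := by
      intro m
      rw [hrec θ (m + 1) (by omega)]
      simp only [Nat.add_sub_cancel]
      set B := ∑ k ∈ Finset.range (n + 1), (k : ℝ) * f k * conv f m (n - k) with hB
      set C := ∑ k ∈ Finset.range (n + 1), f k * conv f m (n - k) with hC
      have expand : conv f (m + 1) n = C := by rw [conv]
      have hm1 : (m : ℝ) + 1 ≠ 0 := by positivity
      have hkey : ((m : ℝ) + 1) * B = (n : ℝ) * C := by
        rw [← expand]; exact key f m n
      have hBdiv : b / (n : ℝ) * B = b * C / ((m : ℝ) + 1) := by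
        rw [eq_div_iff hm1]
        calc b / (n : ℝ) * B * ((m : ℝ) + 1) = b / (n : ℝ) * (((m : ℝ) + 1) * B) := by ring
          _ = b / (n : ℝ) * ((n : ℝ) * C) := by rw [hkey]
          _ = b * C := by field_simp
      have split : ∑ k ∈ Finset.range (n + 1),
          (a + b * (k : ℝ) / n) * f k * conv f m (n - k) = a * C + b / (n : ℝ) * B := by
        rw [hC, hB, Finset.mul_sum, Finset.mul_sum, ← Finset.sum_add_distrib]
        apply Finset.sum_congr rfl
        intro k hk
        ring
      have hfac : conv f (m + 1) n * (a + b / ((m + 1 : ℕ) : ℝ))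
          = ∑ k ∈ Finset.range (n + 1), (a + b * (k : ℝ) / n) * f k * conv f m (n - k) := by
        rw [expand, split, hBdiv]
        push_cast
        ring
      rw [← Finset.sum_mul, ← hfac]
      ring
    rw [Finset.sum_congr rfl fun m _ => hterm m, Finset.sum_comm]
    have hstep : ∀ k ∈ Finset.range (n + 1),
        ∑ m ∈ Finset.range n, ((a + b * k / n) * f k * conv f m (n - k)) * p (θ + lam) m
          = (a + b * k / n) * f k * ∑ m ∈ Finset.range n, conv f m (n - k) * p (θ + lam) m := by
      intro k hk
      rw [Finset.mul_sum]
      apply Finset.sum_congr rfl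
      intro m hm
      ring
    rw [Finset.sum_congr rfl hstep]
    have hsub : Finset.Icc 1 n ⊆ Finset.range (n + 1) := by
      intro x hx
      rw [Finset.mem_Icc] at hx
      rw [Finset.mem_range]
      omega
    have hvan : ∀ x ∈ Finset.range (n + 1), x ∉ Finset.Icc 1 n →
        (a + b * x / n) * f x * ∑ m ∈ Finset.range n, conv f m (n - x) * p (θ + lam) m = 0 := by
      intro x hx hnx
      rw [Finset.mem_range] at hx
      rw [Finset.mem_Icc] at hnx
      have : x = 0 := by omega
      simp [this, hf0]
    rw [← Finset.sum_subset hsub hvan]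
    apply Finset.sum_congr rfl
    intro k hk
    rw [Finset.mem_Icc] at hk
    rw [tsum_eq (p (θ + lam)) (n - k) n (by omega)]
end

section
/- Let Y have the Borel distribution with parameter λ ∈ (0,1), i.e. P{Y=n} = (λn)^{n-1}/n! · e^{-λn} for n ≥ 1. Then E[Y] = 1/(1-λ), i.e. ∑_{n=1}^∞ n·(λn)^{n-1}/n! · e^{-λn} = 1/(1-λ). -/
open Finset Set Filter

noncomputable def abelP (k : ℕ) (x : ℝ) : ℝ := if k = 0 then 1 else x * (x + k) ^ (k - 1)

lemma abelP_zero (x : ℝ) : abelP 0 x = 1 := rfl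

lemma abelP_of_pos {k : ℕ} (hk : k ≠ 0) (x : ℝ) : abelP k x = x * (x + k) ^ (k - 1) := by
  simp [abelP, hk]

lemma abelP_apply_zero {k : ℕ} (hk : k ≠ 0) : abelP k 0 = 0 := by
  simp [abelP, hk]

lemma hasDerivAt_abelP (k : ℕ) (x : ℝ) :
    HasDerivAt (abelP k) ((k : ℝ) * abelP (k - 1) (x + 1)) x := by
  match k with
  | 0 =>
    have h : HasDerivAt (abelP 0) 0 x := hasDerivAt_const x (1 : ℝ)
    simpa using h
  | 1 =>
    have : HasDerivAt (abelP 1) 1 x := by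
      have : abelP 1 = fun y : ℝ => y := by
        funext y; simp [abelP]
      rw [this]; exact hasDerivAt_id x
    simpa [abelP] using this
  | (k + 2) =>
    have h1 : HasDerivAt (fun y : ℝ => (y + ((k : ℝ) + 2)) ^ (k + 1))
        ((k + 1 : ℕ) * (x + ((k : ℝ) + 2)) ^ k * 1) x :=
      ((hasDerivAt_id x).add_const _).pow _
    have h2 : HasDerivAt (fun y : ℝ => y * (y + ((k : ℝ) + 2)) ^ (k + 1))
        (1 * (x + ((k : ℝ) + 2)) ^ (k + 1) + x * ((k + 1 : ℕ) * (x + ((k : ℝ) + 2)) ^ k * 1)) x :=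
      (hasDerivAt_id x).mul h1
    have heq : abelP (k + 2) = fun y : ℝ => y * (y + ((k : ℝ) + 2)) ^ (k + 1) := by
      funext y; simp [abelP]
    rw [heq]
    convert h2 using 1
    have h3 : abelP (k + 2 - 1) (x + 1) = (x + 1) * ((x + 1) + ((k : ℝ) + 1)) ^ k := by
      show abelP (k + 1) (x + 1) = _
      simp [abelP]
    rw [h3]
    push_cast
    ring

noncomputable def abelS (n : ℕ) (x : ℝ) : ℝ :=
  ∑ k ∈ Finset.range (n + 1), (n.choose k : ℝ) * abelP k x * ((n - k : ℕ) : ℝ) ^ (n - k)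

lemma hasDerivAt_abelS (n : ℕ) (x : ℝ) :
    HasDerivAt (abelS n)
      (∑ k ∈ Finset.range (n + 1),
        (n.choose k : ℝ) * ((k : ℝ) * abelP (k - 1) (x + 1)) * ((n - k : ℕ) : ℝ) ^ (n - k)) x := by
  have : HasDerivAt (fun y => ∑ k ∈ Finset.range (n + 1),
      (n.choose k : ℝ) * abelP k y * ((n - k : ℕ) : ℝ) ^ (n - k))
      (∑ k ∈ Finset.range (n + 1),
        (n.choose k : ℝ) * ((k : ℝ) * abelP (k - 1) (x + 1)) * ((n - k : ℕ) : ℝ) ^ (n - k)) x := by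
    apply HasDerivAt.fun_sum
    intro k _
    simpa [mul_assoc, mul_comm, mul_left_comm] using
      (((hasDerivAt_abelP k x).const_mul ((n.choose k : ℝ))).mul_const (((n - k : ℕ) : ℝ) ^ (n - k)))
  exact this

lemma abelS_deriv_eq (n : ℕ) (x : ℝ) :
    ∑ k ∈ Finset.range (n + 2),
      ((n + 1).choose k : ℝ) * ((k : ℝ) * abelP (k - 1) (x + 1)) * ((n + 1 - k : ℕ) : ℝ) ^ (n + 1 - k)
    = (n + 1 : ℝ) * abelS n (x + 1) := by
  rw [Finset.sum_range_succ']
  simp only [Nat.cast_zero, zero_mul, mul_zero, add_zero]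
  rw [abelS, Finset.mul_sum]
  apply Finset.sum_congr rfl
  intro j hj
  have hcast : (((n + 1).choose (j + 1) : ℝ)) * ((j + 1 : ℕ) : ℝ) = (n + 1 : ℝ) * (n.choose j : ℝ) := by
    have := Nat.add_one_mul_choose_eq n j
    have : ((n + 1) * n.choose j : ℕ) = ((n + 1).choose (j + 1) * (j + 1) : ℕ) := this
    exact_mod_cast congrArg (fun m : ℕ => (m : ℝ)) this.symm
  have hsub : n + 1 - (j + 1) = n - j := by omega
  have hidx : j + 1 - 1 = j := by omega
  rw [hsub, hidx]
  linear_combination (abelP j (x + 1) * ((n - j : ℕ) : ℝ) ^ (n - j)) * hcast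

lemma abelS_apply_zero (n : ℕ) : abelS n 0 = (n : ℝ) ^ n := by
  rw [abelS, Finset.sum_eq_single 0]
  · simp [abelP]
  · intro k _ hk0
    rw [abelP_apply_zero hk0]; ring
  · intro h; exact absurd (Finset.mem_range.2 (Nat.succ_pos n)) h

lemma abelS_eq (n : ℕ) : ∀ x : ℝ, abelS n x = (x + n) ^ n := by
  induction n with
  | zero => intro x; simp [abelS, abelP]
  | succ n ih =>
    intro x
    have hderiv : ∀ y : ℝ,
        HasDerivAt (fun z => abelS (n + 1) z - (z + ((n : ℝ) + 1)) ^ (n + 1)) 0 y := by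
      intro y
      have h1 := hasDerivAt_abelS (n + 1) y
      rw [abelS_deriv_eq n y, ih (y + 1)] at h1
      have h2 : HasDerivAt (fun z : ℝ => (z + ((n : ℝ) + 1)) ^ (n + 1))
          ((n + 1 : ℕ) * (y + ((n : ℝ) + 1)) ^ n * 1) y :=
        ((hasDerivAt_id y).add_const _).pow _
      have h3 := h1.sub h2
      refine h3.congr_deriv (Eq.symm ?_)
      push_cast
      ring
    have hconst := is_const_of_deriv_eq_zero
      (fun y => (hderiv y).differentiableAt)
      (fun y => (hderiv y).deriv) x 0
    have h0 : abelS (n + 1) 0 - ((0 : ℝ) + ((n : ℝ) + 1)) ^ (n + 1) = 0 := by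
      rw [abelS_apply_zero]
      push_cast
      ring
    have := hconst.trans h0
    have h4 : abelS (n + 1) x = (x + ((n : ℝ) + 1)) ^ (n + 1) := by linarith [this]
    rw [h4]; push_cast; ring

lemma key_identity (n : ℕ) :
    ∑ k ∈ Finset.range (n + 2),
      ((n + 1).choose k : ℝ) * ((k : ℝ) * abelP (k - 1) 1) * ((n + 1 - k : ℕ) : ℝ) ^ (n + 1 - k)
    = ((n + 1 : ℕ) : ℝ) ^ (n + 1) := by
  have h := abelS_deriv_eq n 0
  simp only [zero_add] at h
  rw [h, abelS_eq n 1]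
  push_cast
  ring

lemma k_mul_abelP {k : ℕ} (hk : k ≠ 0) : (k : ℝ) * abelP (k - 1) 1 = (k : ℝ) ^ (k - 1) := by
  match k with
  | 1 => simp [abelP]
  | (j + 2) =>
    have h1 : abelP (j + 1) 1 = ((j : ℝ) + 2) ^ j := by
      simp [abelP]
      ring_nf
    show ((j + 2 : ℕ) : ℝ) * abelP (j + 1) 1 = _
    rw [h1]
    push_cast
    rw [pow_succ]
    ring

noncomputable def borelA (n : ℕ) : ℝ := if n = 0 then 0 else (n : ℝ) ^ (n - 1) / n.factorial
noncomputable def borelB (n : ℕ) : ℝ := if n = 0 then 0 else (n : ℝ) ^ n / n.factorial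

lemma cauchy_term (n : ℕ) :
    ∑ k ∈ Finset.range (n + 1), borelA k * borelB (n - k) = borelB n - borelA n := by
  match n with
  | 0 => simp [borelA, borelB]
  | (n + 1) =>
    -- peel last term of key identity
    have hkey := key_identity n
    rw [Finset.sum_range_succ] at hkey
    have hlast : ((n + 1).choose (n + 1) : ℝ) * (((n + 1 : ℕ) : ℝ) * abelP (n + 1 - 1) 1)
        * ((n + 1 - (n + 1) : ℕ) : ℝ) ^ (n + 1 - (n + 1)) = ((n + 1 : ℕ) : ℝ) ^ n := by
      rw [k_mul_abelP (Nat.succ_ne_zero n), Nat.choose_self, Nat.sub_self]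
      simp
    rw [hlast] at hkey
    have hkey2 : ∑ k ∈ Finset.range (n + 1),
        ((n + 1).choose k : ℝ) * ((k : ℝ) * abelP (k - 1) 1) * ((n + 1 - k : ℕ) : ℝ) ^ (n + 1 - k)
        = ((n + 1 : ℕ) : ℝ) ^ (n + 1) - ((n + 1 : ℕ) : ℝ) ^ n := by linarith
    -- peel last (zero) term of the LHS
    rw [Finset.sum_range_succ]
    have hz : borelA (n + 1) * borelB (n + 1 - (n + 1)) = 0 := by
      rw [Nat.sub_self]; simp [borelB]
    rw [hz, add_zero]
    -- termwise comparison
    have hterm : ∀ k ∈ Finset.range (n + 1), borelA k * borelB (n + 1 - k)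
        = ((n + 1).choose k : ℝ) * ((k : ℝ) * abelP (k - 1) 1) * ((n + 1 - k : ℕ) : ℝ) ^ (n + 1 - k)
          / (n + 1).factorial := by
      intro k hk
      have hkn : k ≤ n := Nat.lt_succ_iff.mp (Finset.mem_range.mp hk)
      rcases Nat.eq_zero_or_pos k with rfl | hkpos
      · simp [borelA]
      · have hk0 : k ≠ 0 := Nat.pos_iff_ne_zero.mp hkpos
        have hnk0 : n + 1 - k ≠ 0 := by omega
        rw [borelA, borelB, if_neg hk0, if_neg hnk0, k_mul_abelP hk0]
        have hfact : ((n + 1).choose k : ℝ) * (k.factorial : ℝ) * ((n + 1 - k).factorial : ℝ)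
            = ((n + 1).factorial : ℝ) := by
          exact_mod_cast congrArg (fun m : ℕ => (m : ℝ))
            (Nat.choose_mul_factorial_mul_factorial (by omega : k ≤ n + 1))
        have hkf : (k.factorial : ℝ) ≠ 0 := Nat.cast_ne_zero.mpr (Nat.factorial_ne_zero k)
        have hnkf : ((n + 1 - k).factorial : ℝ) ≠ 0 := Nat.cast_ne_zero.mpr (Nat.factorial_ne_zero _)
        have hnf : (((n + 1).factorial : ℕ) : ℝ) ≠ 0 := Nat.cast_ne_zero.mpr (Nat.factorial_ne_zero _)
        field_simp
        linear_combination -hfact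
    rw [Finset.sum_congr rfl hterm, ← Finset.sum_div, hkey2]
    rw [borelA, borelB, if_neg (Nat.succ_ne_zero n), if_neg (Nat.succ_ne_zero n)]
    rw [show n + 1 - 1 = n from rfl]
    push_cast
    field_simp

lemma borelA_nonneg (n : ℕ) : 0 ≤ borelA n := by
  unfold borelA; split
  · exact le_refl 0
  · positivity

lemma borelB_nonneg (n : ℕ) : 0 ≤ borelB n := by
  unfold borelB; split
  · exact le_refl 0
  · positivity

lemma pow_self_le (n : ℕ) : (n : ℝ) ^ n ≤ n.factorial * Real.exp 1 ^ n := by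
  induction n with
  | zero => simp
  | succ n ih =>
    have hstep : ((n : ℝ) + 1) ^ n ≤ (n.factorial : ℝ) * Real.exp 1 ^ n * Real.exp 1 := by
      rcases Nat.eq_zero_or_pos n with rfl | hn
      · simpa using Real.one_le_exp (le_refl 1).le
      · have hn' : (0 : ℝ) < n := by exact_mod_cast hn
        have h1 : (n : ℝ) + 1 ≤ n * Real.exp (1 / n) := by
          have := Real.add_one_le_exp (1 / (n : ℝ))
          calc (n : ℝ) + 1 = n * (1 / n + 1) := by field_simp; ring
            _ ≤ n * Real.exp (1 / n) := by nlinarith [this]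
        have h2 : ((n : ℝ) + 1) ^ n ≤ ((n : ℝ) * Real.exp (1 / n)) ^ n := by
          apply pow_le_pow_left₀ (by positivity) h1
        have h3 : ((n : ℝ) * Real.exp (1 / n)) ^ n = (n : ℝ) ^ n * Real.exp 1 := by
          rw [mul_pow, ← Real.exp_nat_mul]
          congr 2
          field_simp
        calc ((n : ℝ) + 1) ^ n ≤ (n : ℝ) ^ n * Real.exp 1 := by rw [← h3]; exact h2
          _ ≤ (n.factorial : ℝ) * Real.exp 1 ^ n * Real.exp 1 := by
              have := Real.exp_pos 1
              nlinarith [ih]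
    have : ((n + 1 : ℕ) : ℝ) ^ (n + 1) = ((n : ℝ) + 1) * ((n : ℝ) + 1) ^ n := by
      push_cast; rw [pow_succ]; ring
    rw [this]
    have hfact : ((n + 1).factorial : ℝ) = ((n : ℝ) + 1) * n.factorial := by
      rw [Nat.factorial_succ]; push_cast; ring
    rw [hfact, pow_succ]
    have hpos : (0 : ℝ) < (n : ℝ) + 1 := by positivity
    nlinarith [hstep]

lemma borelB_le (n : ℕ) {x : ℝ} (hx : 0 ≤ x) : borelB n * x ^ n ≤ (Real.exp 1 * x) ^ n := by
  unfold borelB; split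
  · next h => subst h; simp
  · next h =>
    rw [mul_pow]
    have hf : (0 : ℝ) < n.factorial := by exact_mod_cast Nat.factorial_pos n
    have := pow_self_le n
    have h1 : (n : ℝ) ^ n / n.factorial ≤ Real.exp 1 ^ n := by
      rw [div_le_iff₀ hf]; nlinarith [this]
    have hxn : (0 : ℝ) ≤ x ^ n := by positivity
    nlinarith [h1, pow_nonneg (Real.exp_pos 1).le n]

lemma borelA_le_borelB (n : ℕ) : borelA n ≤ borelB n := by
  unfold borelA borelB; split
  · exact le_refl _
  · next h =>
    have hf : (0 : ℝ) < n.factorial := by exact_mod_cast Nat.factorial_pos n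
    have h1 : (1 : ℝ) ≤ (n : ℝ) := by exact_mod_cast Nat.one_le_iff_ne_zero.mpr h
    gcongr
    · omega

lemma summable_borelB {x : ℝ} (hx : 0 ≤ x) (hex : Real.exp 1 * x < 1) :
    Summable (fun n => borelB n * x ^ n) := by
  apply Summable.of_nonneg_of_le
    (fun n => mul_nonneg (borelB_nonneg n) (by positivity))
    (fun n => borelB_le n hx)
  exact summable_geometric_of_lt_one (by positivity) hex

lemma summable_borelA {x : ℝ} (hx : 0 ≤ x) (hex : Real.exp 1 * x < 1) :
    Summable (fun n => borelA n * x ^ n) := by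
  apply Summable.of_nonneg_of_le
    (fun n => mul_nonneg (borelA_nonneg n) (by positivity))
    (fun n => ?_) (summable_borelB hx hex)
  exact mul_le_mul_of_nonneg_right (borelA_le_borelB n) (by positivity)

lemma exp_mul_lt_one {t : ℝ} (ht : t ∈ Set.Ioo (0:ℝ) 1) :
    Real.exp 1 * (t * Real.exp (-t)) < 1 := by
  obtain ⟨ht0, ht1⟩ := ht
  have hne : t - 1 ≠ 0 := by
    intro h; rw [sub_eq_zero] at h; exact absurd h (by linarith)
  have h1 : t < Real.exp (t - 1) := by
    have := Real.add_one_lt_exp hne; linarith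
  have h2 : Real.exp 1 * (t * Real.exp (-t)) = t * (Real.exp (t - 1))⁻¹ := by
    rw [show Real.exp 1 * (t * Real.exp (-t)) = t * (Real.exp 1 * Real.exp (-t)) from by ring,
      ← Real.exp_add, show (1 : ℝ) + -t = -(t - 1) from by ring, Real.exp_neg]
  rw [h2]
  have hp := Real.exp_pos (t - 1)
  have hinv : Real.exp (t - 1) * (Real.exp (t - 1))⁻¹ = 1 := mul_inv_cancel₀ hp.ne'
  nlinarith [inv_pos.mpr hp, h1]

lemma hasDerivAt_psi (s : ℝ) :
    HasDerivAt (fun y : ℝ => y * Real.exp (-y)) ((1 - s) * Real.exp (-s)) s := by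
  have h1 : HasDerivAt (fun y : ℝ => Real.exp (-y)) (Real.exp (-s) * (-1)) s :=
    (hasDerivAt_neg s).exp
  have h2 := (hasDerivAt_id s).mul h1
  refine h2.congr_deriv (Eq.symm ?_)
  simp only [id_eq]
  ring

lemma psi_strictMonoOn : StrictMonoOn (fun s : ℝ => s * Real.exp (-s)) (Set.Icc 0 1) := by
  apply strictMonoOn_of_deriv_pos (convex_Icc 0 1)
  · exact (continuous_id.mul (Real.continuous_exp.comp continuous_neg)).continuousOn
  · intro x hx
    rw [interior_Icc] at hx
    rw [(hasDerivAt_psi x).deriv]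
    have := Real.exp_pos (-x)
    nlinarith [hx.1, hx.2]

lemma psi_le_psi {s b : ℝ} (hs : 0 ≤ s) (hsb : s ≤ b) (hb : b ≤ 1) :
    s * Real.exp (-s) ≤ b * Real.exp (-b) :=
  psi_strictMonoOn.monotoneOn ⟨hs, hsb.trans hb⟩ ⟨hs.trans hsb, hb⟩ hsb

noncomputable def Ufun (t : ℝ) : ℝ := ∑' n, borelA n * (t * Real.exp (-t)) ^ n
noncomputable def Bfun (t : ℝ) : ℝ := ∑' n, borelB n * (t * Real.exp (-t)) ^ n

lemma Bfun_nonneg {t : ℝ} (ht : 0 ≤ t) : 0 ≤ Bfun t :=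
  tsum_nonneg fun n => mul_nonneg (borelB_nonneg n)
    (pow_nonneg (mul_nonneg ht (Real.exp_pos _).le) n)

lemma Ufun_nonneg {t : ℝ} (ht : 0 ≤ t) : 0 ≤ Ufun t :=
  tsum_nonneg fun n => mul_nonneg (borelA_nonneg n)
    (pow_nonneg (mul_nonneg ht (Real.exp_pos _).le) n)

lemma UB_eq {t : ℝ} (ht : t ∈ Set.Ioo (0:ℝ) 1) :
    Ufun t * Bfun t = Bfun t - Ufun t := by
  set x := t * Real.exp (-t) with hxdef
  have hx0 : 0 ≤ x := mul_nonneg ht.1.le (Real.exp_pos _).le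
  have hex := exp_mul_lt_one ht
  have hA := summable_borelA hx0 hex
  have hB := summable_borelB hx0 hex
  have hAn : Summable (fun n => ‖borelA n * x ^ n‖) := by
    have : (fun n => ‖borelA n * x ^ n‖) = fun n => borelA n * x ^ n := by
      funext n
      rw [Real.norm_eq_abs, abs_of_nonneg (mul_nonneg (borelA_nonneg n) (pow_nonneg hx0 n))]
    rw [this]; exact hA
  have hBn : Summable (fun n => ‖borelB n * x ^ n‖) := by
    have : (fun n => ‖borelB n * x ^ n‖) = fun n => borelB n * x ^ n := by
      funext n
      rw [Real.norm_eq_abs, abs_of_nonneg (mul_nonneg (borelB_nonneg n) (pow_nonneg hx0 n))]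
    rw [this]; exact hB
  have hmain := tsum_mul_tsum_eq_tsum_sum_antidiagonal_of_summable_norm hAn hBn
  rw [Ufun, Bfun, ← hxdef, hmain]
  have hinner : ∀ n : ℕ, ∑ kl ∈ Finset.HasAntidiagonal.antidiagonal n,
      (borelA kl.1 * x ^ kl.1) * (borelB kl.2 * x ^ kl.2)
      = borelB n * x ^ n - borelA n * x ^ n := by
    intro n
    rw [Finset.Nat.sum_antidiagonal_eq_sum_range_succ_mk]
    have hterm : ∀ k ∈ Finset.range (n + 1),
        (borelA k * x ^ k) * (borelB (n - k) * x ^ (n - k))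
        = (borelA k * borelB (n - k)) * x ^ n := by
      intro k hk
      have hkn : k + (n - k) = n := by
        have := Finset.mem_range.mp hk; omega
      have hpow : x ^ n = x ^ k * x ^ (n - k) := by rw [← pow_add, hkn]
      rw [hpow]; ring
    rw [Finset.sum_congr rfl hterm, ← Finset.sum_mul, cauchy_term n, sub_mul]
  rw [tsum_congr hinner, Summable.tsum_sub hB hA]

lemma Ufun_lt_one {t : ℝ} (ht : t ∈ Set.Ioo (0:ℝ) 1) : Ufun t < 1 := by
  have h := UB_eq ht
  have hB := Bfun_nonneg ht.1.le
  have hU := Ufun_nonneg ht.1.le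
  nlinarith

lemma one_sub_U_mul_B {t : ℝ} (ht : t ∈ Set.Ioo (0:ℝ) 1) :
    (1 - Ufun t) * Bfun t = Ufun t := by
  have h := UB_eq ht
  nlinarith [h]

lemma term_hasDerivAt (n : ℕ) {y : ℝ} (hy : y ≠ 0) :
    HasDerivAt (fun z => borelA n * (z * Real.exp (-z)) ^ n)
      ((1 - y) / y * (borelB n * (y * Real.exp (-y)) ^ n)) y := by
  have h := ((hasDerivAt_psi y).pow n).const_mul (borelA n)
  refine h.congr_deriv (Eq.symm ?_)
  match n with
  | 0 => simp [borelB]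
  | (m + 1) =>
    have hAB : borelA (m + 1) * ((m + 1 : ℕ) : ℝ) = borelB (m + 1) := by
      rw [borelA, borelB, if_neg (Nat.succ_ne_zero m), if_neg (Nat.succ_ne_zero m)]
      rw [div_mul_eq_mul_div, ← pow_succ]
      norm_num
    push_cast at hAB ⊢
    rw [← hAB, pow_succ]
    field_simp

lemma hasDerivAt_Ufun {t : ℝ} (ht : t ∈ Set.Ioo (0:ℝ) 1) :
    HasDerivAt Ufun ((1 - t) / t * Bfun t) t := by
  obtain ⟨ht0, ht1⟩ := ht
  set a := t / 2 with ha_def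
  set b := (t + 1) / 2 with hb_def
  have ha0 : 0 < a := by positivity
  have hb1 : b < 1 := by rw [hb_def]; linarith
  have hb0 : 0 < b := by rw [hb_def]; linarith
  have htab : t ∈ Ioo a b := ⟨by rw [ha_def]; linarith, by rw [hb_def]; linarith⟩
  have hsub : Ioo a b ⊆ Ioo (0:ℝ) 1 := fun y hy => ⟨ha0.trans hy.1, hy.2.trans_le hb1.le⟩
  set q := Real.exp 1 * (b * Real.exp (-b)) with hq_def
  have hq0 : 0 ≤ q := by
    rw [hq_def]; positivity
  have hq1 : q < 1 := exp_mul_lt_one ⟨hb0, hb1⟩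
  have hu : Summable (fun n : ℕ => a⁻¹ * q ^ n) :=
    (summable_geometric_of_lt_one hq0 hq1).mul_left _
  have hbound : ∀ (n : ℕ), ∀ y ∈ Ioo a b,
      ‖(1 - y) / y * (borelB n * (y * Real.exp (-y)) ^ n)‖ ≤ a⁻¹ * q ^ n := by
    intro n y hy
    have hy0 : 0 < y := ha0.trans hy.1
    have hy1 : y < 1 := hy.2.trans_le hb1.le
    have hp0 : 0 ≤ y * Real.exp (-y) := mul_nonneg hy0.le (Real.exp_pos _).le
    have h1 : 0 ≤ (1 - y) / y := div_nonneg (by linarith) hy0.le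
    have h2 : 0 ≤ borelB n * (y * Real.exp (-y)) ^ n :=
      mul_nonneg (borelB_nonneg n) (pow_nonneg hp0 n)
    rw [Real.norm_eq_abs, abs_of_nonneg (mul_nonneg h1 h2)]
    have h3 : (1 - y) / y ≤ a⁻¹ := by
      rw [div_le_iff₀ hy0]
      have hia : a⁻¹ * a = 1 := inv_mul_cancel₀ ha0.ne'
      nlinarith [inv_pos.mpr ha0, hy.1]
    have h4 : borelB n * (y * Real.exp (-y)) ^ n ≤ q ^ n := by
      calc borelB n * (y * Real.exp (-y)) ^ n
          ≤ (Real.exp 1 * (y * Real.exp (-y))) ^ n := borelB_le n hp0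
        _ ≤ q ^ n := by
            apply pow_le_pow_left₀ (by positivity)
            rw [hq_def]
            exact mul_le_mul_of_nonneg_left (psi_le_psi hy0.le hy.2.le hb1.le) (Real.exp_pos 1).le
    exact mul_le_mul h3 h4 h2 (inv_nonneg.mpr ha0.le)
  have hsummt : Summable (fun n => borelA n * (t * Real.exp (-t)) ^ n) :=
    summable_borelA (mul_nonneg ht0.le (Real.exp_pos _).le) (exp_mul_lt_one ⟨ht0, ht1⟩)
  have key : HasDerivAt (fun z => ∑' n, borelA n * (z * Real.exp (-z)) ^ n)
      (∑' n, (1 - t) / t * (borelB n * (t * Real.exp (-t)) ^ n)) t :=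
    hasDerivAt_tsum_of_isPreconnected hu isOpen_Ioo
      (isPreconnected_Ioo (a := a) (b := b))
      (fun n y hy => term_hasDerivAt n (ha0.trans hy.1).ne')
      hbound htab hsummt htab
  have heq : (∑' n, (1 - t) / t * (borelB n * (t * Real.exp (-t)) ^ n))
      = (1 - t) / t * Bfun t := tsum_mul_left
  rw [heq] at key
  exact key

noncomputable def phi (t : ℝ) : ℝ := (Ufun t * Real.exp (-(Ufun t))) * (Real.exp t / t)

lemma hasDerivAt_phi {t : ℝ} (ht : t ∈ Set.Ioo (0:ℝ) 1) : HasDerivAt phi 0 t := by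
  obtain ⟨ht0, ht1⟩ := ht
  have hU := hasDerivAt_Ufun ⟨ht0, ht1⟩
  have hW : HasDerivAt (fun s => Ufun s * Real.exp (-(Ufun s)))
      ((1 - Ufun t) * Real.exp (-(Ufun t)) * ((1 - t) / t * Bfun t)) t :=
    (hasDerivAt_psi (Ufun t)).comp t hU
  have hE : HasDerivAt (fun s : ℝ => Real.exp s / s)
      ((Real.exp t * t - Real.exp t * 1) / t ^ 2) t :=
    (Real.hasDerivAt_exp t).div (hasDerivAt_id t) ht0.ne'
  have hprod := hW.mul hE
  have hrel := one_sub_U_mul_B ⟨ht0, ht1⟩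
  have hval : (1 - Ufun t) * Real.exp (-(Ufun t)) * ((1 - t) / t * Bfun t) * (Real.exp t / t)
      + (Ufun t * Real.exp (-(Ufun t))) * ((Real.exp t * t - Real.exp t * 1) / t ^ 2) = 0 := by
    have h1 : (1 - Ufun t) * Real.exp (-(Ufun t)) * ((1 - t) / t * Bfun t)
        = (1 - t) / t * (Ufun t * Real.exp (-(Ufun t))) := by
      linear_combination (Real.exp (-(Ufun t)) * (1 - t) / t) * hrel
    rw [h1]
    field_simp
    ring
  have : HasDerivAt phi ((1 - Ufun t) * Real.exp (-(Ufun t)) * ((1 - t) / t * Bfun t) * (Real.exp t / t)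
      + (Ufun t * Real.exp (-(Ufun t))) * ((Real.exp t * t - Real.exp t * 1) / t ^ 2)) t := hprod
  rw [hval] at this
  exact this

lemma phi_constant {t₁ t₂ : ℝ} (h1 : t₁ ∈ Set.Ioo (0:ℝ) 1) (h2 : t₂ ∈ Set.Ioo (0:ℝ) 1)
    (hle : t₁ ≤ t₂) : phi t₂ = phi t₁ := by
  have hIcc : Icc t₁ t₂ ⊆ Ioo (0:ℝ) 1 := fun y hy =>
    ⟨h1.1.trans_le hy.1, hy.2.trans_lt h2.2⟩
  have hcont : ContinuousOn phi (Icc t₁ t₂) := fun y hy =>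
    (hasDerivAt_phi (hIcc hy)).continuousAt.continuousWithinAt
  have hderiv : ∀ y ∈ Ico t₁ t₂, HasDerivWithinAt phi 0 (Ici y) y := fun y hy =>
    (hasDerivAt_phi (hIcc ⟨hy.1, hy.2.le⟩)).hasDerivWithinAt
  exact constant_of_has_deriv_right_zero hcont hderiv t₂ ⟨hle, le_refl _⟩

lemma Ufun_ge {t : ℝ} (ht : t ∈ Set.Ioo (0:ℝ) 1) : t * Real.exp (-t) ≤ Ufun t := by
  obtain ⟨ht0, ht1⟩ := ht
  set x := t * Real.exp (-t) with hx_def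
  have hx0 : 0 ≤ x := mul_nonneg ht0.le (Real.exp_pos _).le
  have hA := summable_borelA hx0 (exp_mul_lt_one ⟨ht0, ht1⟩)
  have h1 : borelA 1 * x ^ 1 ≤ ∑' n, borelA n * x ^ n :=
    Summable.le_tsum hA 1 (fun j _ => mul_nonneg (borelA_nonneg j) (pow_nonneg hx0 j))
  have : borelA 1 * x ^ 1 = x := by
    simp [borelA]
  rw [this] at h1
  exact h1

set_option maxHeartbeats 1000000 in
lemma Ufun_upper {t : ℝ} (ht : t ∈ Set.Ioo (0:ℝ) 1) :
    Ufun t ≤ Real.exp 1 * (t * Real.exp (-t)) * (1 - Real.exp 1 * (t * Real.exp (-t)))⁻¹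
    ∧ Ufun t ≤ t * Real.exp (-t)
      + (Real.exp 1 * (t * Real.exp (-t))) ^ 2 * (1 - Real.exp 1 * (t * Real.exp (-t)))⁻¹ := by
  obtain ⟨ht0, ht1⟩ := ht
  set x := t * Real.exp (-t) with hx_def
  set r := Real.exp 1 * x with hr_def
  have hx0 : 0 ≤ x := mul_nonneg ht0.le (Real.exp_pos _).le
  have hr1 : r < 1 := exp_mul_lt_one ⟨ht0, ht1⟩
  have hr0 : 0 ≤ r := mul_nonneg (Real.exp_pos 1).le hx0
  have hA := summable_borelA hx0 hr1
  have hterm : ∀ n : ℕ, borelA n * x ^ n ≤ r ^ n := by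
    intro n
    calc borelA n * x ^ n ≤ borelB n * x ^ n :=
          mul_le_mul_of_nonneg_right (borelA_le_borelB n) (pow_nonneg hx0 n)
      _ ≤ (Real.exp 1 * x) ^ n := borelB_le n hx0
  have hgeom : Summable (fun n : ℕ => r ^ n) := summable_geometric_of_lt_one hr0 hr1
  have hA1 : Summable (fun n => borelA (n + 1) * x ^ (n + 1)) :=
    (summable_nat_add_iff 1).mpr hA
  have hA2 : Summable (fun n => borelA (n + 2) * x ^ (n + 2)) :=
    (summable_nat_add_iff 2).mpr hA
  have hg1 : Summable (fun n : ℕ => r ^ (n + 1)) := (summable_nat_add_iff 1).mpr hgeom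
  have hg2 : Summable (fun n : ℕ => r ^ (n + 2)) := (summable_nat_add_iff 2).mpr hgeom
  have hU0 : Ufun t = ∑' n, borelA (n + 1) * x ^ (n + 1) := by
    rw [Ufun, ← hx_def, Summable.tsum_eq_zero_add hA]
    simp [borelA]
  have hsum1 : (∑' n : ℕ, r ^ (n + 1)) = r * (1 - r)⁻¹ := by
    have : (fun n : ℕ => r ^ (n + 1)) = fun n : ℕ => r * r ^ n := by
      funext n; rw [pow_succ]; ring
    rw [this, tsum_mul_left, tsum_geometric_of_lt_one hr0 hr1]
  have hsum2 : (∑' n : ℕ, r ^ (n + 2)) = r ^ 2 * (1 - r)⁻¹ := by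
    have : (fun n : ℕ => r ^ (n + 2)) = fun n : ℕ => r ^ 2 * r ^ n := by
      funext n; rw [pow_add]; ring
    rw [this, tsum_mul_left, tsum_geometric_of_lt_one hr0 hr1]
  constructor
  · rw [hU0, ← hsum1]
    exact Summable.tsum_le_tsum (fun n => hterm (n + 1)) hA1 hg1
  · have hU1 : Ufun t = x + ∑' n, borelA (n + 2) * x ^ (n + 2) := by
      rw [hU0, Summable.tsum_eq_zero_add hA1]
      simp only [borelA]
      norm_num
      exact tsum_congr fun b => by push_cast; ring_nf
    rw [hU1, ← hsum2]
    have := Summable.tsum_le_tsum (fun n => hterm (n + 2)) hA2 hg2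
    linarith

lemma phi_bounds {t : ℝ} (ht : t ∈ Set.Ioo (0:ℝ) 1) :
    1 - Real.exp 1 * (t * Real.exp (-t)) * (1 - Real.exp 1 * (t * Real.exp (-t)))⁻¹ ≤ phi t
    ∧ phi t ≤ 1 + Real.exp 1 ^ 2 * (t * Real.exp (-t)) * (1 - Real.exp 1 * (t * Real.exp (-t)))⁻¹ := by
  obtain ⟨ht0, ht1⟩ := ht
  set x := t * Real.exp (-t) with hx_def
  set r := Real.exp 1 * x with hr_def
  set U := Ufun t with hU_def
  set E := Real.exp t / t with hE_def
  set P := Real.exp (-U) with hP_def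
  have hx0 : 0 < x := mul_pos ht0 (Real.exp_pos _)
  have hr1 : r < 1 := exp_mul_lt_one ⟨ht0, ht1⟩
  have hr0 : 0 ≤ r := mul_nonneg (Real.exp_pos 1).le hx0.le
  have hE0 : 0 < E := div_pos (Real.exp_pos t) ht0
  have hxE : x * E = 1 := by
    rw [hx_def, hE_def]
    rw [show t * Real.exp (-t) * (Real.exp t / t) = (Real.exp (-t) * Real.exp t) * (t / t) from by ring]
    rw [← Real.exp_add, div_self ht0.ne']
    simp
  have hU0 : 0 ≤ U := Ufun_nonneg ht0.le
  have hU1 : U < 1 := Ufun_lt_one ⟨ht0, ht1⟩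
  have hUx : x ≤ U := Ufun_ge ⟨ht0, ht1⟩
  obtain ⟨hUup, hUup2⟩ := Ufun_upper ⟨ht0, ht1⟩
  have hP0 : 0 < P := Real.exp_pos _
  have hP1 : P ≤ 1 := by
    rw [hP_def, ← Real.exp_zero]
    exact Real.exp_le_exp.mpr (by linarith)
  have hPlow : 1 - U ≤ P := by
    have := Real.add_one_le_exp (-U)
    rw [hP_def]; linarith
  have hphi : phi t = U * P * E := by
    rw [phi, hP_def, hE_def, hU_def]
  constructor
  · -- lower bound
    have s1 : 1 - r * (1 - r)⁻¹ ≤ 1 - U := by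
      have : U ≤ r * (1 - r)⁻¹ := hUup
      linarith
    have s2 : (1 - U) = x * E * (1 - U) := by rw [hxE]; ring
    have s3 : x * E * (1 - U) ≤ U * E * (1 - U) := by
      apply mul_le_mul_of_nonneg_right (mul_le_mul_of_nonneg_right hUx hE0.le) (by linarith)
    have s4 : U * E * (1 - U) ≤ U * E * P :=
      mul_le_mul_of_nonneg_left hPlow (mul_nonneg hU0 hE0.le)
    rw [hphi]
    calc 1 - r * (1 - r)⁻¹ ≤ 1 - U := s1
      _ = x * E * (1 - U) := s2
      _ ≤ U * E * (1 - U) := s3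
      _ ≤ U * E * P := s4
      _ = U * P * E := by ring
  · -- upper bound
    have s1 : U * P * E ≤ U * E := by
      have : U * P ≤ U * 1 := mul_le_mul_of_nonneg_left hP1 hU0
      nlinarith [hE0]
    have s2 : U * E ≤ (x + r ^ 2 * (1 - r)⁻¹) * E := by
      apply mul_le_mul_of_nonneg_right hUup2 hE0.le
    have s3 : (x + r ^ 2 * (1 - r)⁻¹) * E = 1 + Real.exp 1 ^ 2 * x * (1 - r)⁻¹ := by
      have hr2 : r ^ 2 * E = Real.exp 1 ^ 2 * x := by
        rw [hr_def]
        have : (Real.exp 1 * x) ^ 2 * E = Real.exp 1 ^ 2 * x * (x * E) := by ring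
        rw [this, hxE, mul_one]
      calc (x + r ^ 2 * (1 - r)⁻¹) * E = x * E + (r ^ 2 * E) * (1 - r)⁻¹ := by ring
        _ = 1 + Real.exp 1 ^ 2 * x * (1 - r)⁻¹ := by rw [hxE, hr2]
    rw [hphi]
    calc U * P * E ≤ U * E := s1
      _ ≤ (x + r ^ 2 * (1 - r)⁻¹) * E := s2
      _ = 1 + Real.exp 1 ^ 2 * x * (1 - r)⁻¹ := s3

lemma tendsto_phi : Filter.Tendsto phi (nhdsWithin 0 (Set.Ioo (0:ℝ) 1)) (nhds 1) := by
  have hxcont : Filter.Tendsto (fun t : ℝ => t * Real.exp (-t))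
      (nhdsWithin 0 (Set.Ioo (0:ℝ) 1)) (nhds 0) := by
    have hc : Continuous (fun t : ℝ => t * Real.exp (-t)) :=
      continuous_id.mul (Real.continuous_exp.comp continuous_neg)
    have := hc.tendsto 0
    simp only [zero_mul] at this
    exact this.mono_left nhdsWithin_le_nhds
  have hr : Filter.Tendsto (fun t : ℝ => Real.exp 1 * (t * Real.exp (-t)))
      (nhdsWithin 0 (Set.Ioo (0:ℝ) 1)) (nhds 0) := by
    have := hxcont.const_mul (Real.exp 1)
    simpa using this
  have hinv : Filter.Tendsto (fun t : ℝ => (1 - Real.exp 1 * (t * Real.exp (-t)))⁻¹)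
      (nhdsWithin 0 (Set.Ioo (0:ℝ) 1)) (nhds 1) := by
    have h1 : Filter.Tendsto (fun t : ℝ => 1 - Real.exp 1 * (t * Real.exp (-t)))
        (nhdsWithin 0 (Set.Ioo (0:ℝ) 1)) (nhds 1) := by
      have := (tendsto_const_nhds (x := (1:ℝ))
        (f := nhdsWithin 0 (Set.Ioo (0:ℝ) 1))).sub hr
      simpa using this
    have := h1.inv₀ one_ne_zero
    simpa using this
  have hlo : Filter.Tendsto
      (fun t : ℝ => 1 - Real.exp 1 * (t * Real.exp (-t)) * (1 - Real.exp 1 * (t * Real.exp (-t)))⁻¹)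
      (nhdsWithin 0 (Set.Ioo (0:ℝ) 1)) (nhds 1) := by
    have h2 := hr.mul hinv
    have := (tendsto_const_nhds (x := (1:ℝ))
      (f := nhdsWithin 0 (Set.Ioo (0:ℝ) 1))).sub h2
    simpa using this
  have hhi : Filter.Tendsto
      (fun t : ℝ => 1 + Real.exp 1 ^ 2 * (t * Real.exp (-t)) * (1 - Real.exp 1 * (t * Real.exp (-t)))⁻¹)
      (nhdsWithin 0 (Set.Ioo (0:ℝ) 1)) (nhds 1) := by
    have h2 : Filter.Tendsto (fun t : ℝ => Real.exp 1 ^ 2 * (t * Real.exp (-t)))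
        (nhdsWithin 0 (Set.Ioo (0:ℝ) 1)) (nhds 0) := by
      have := hxcont.const_mul (Real.exp 1 ^ 2)
      simpa using this
    have h3 := h2.mul hinv
    have := (tendsto_const_nhds (x := (1:ℝ))
      (f := nhdsWithin 0 (Set.Ioo (0:ℝ) 1))).add h3
    simpa using this
  apply tendsto_of_tendsto_of_tendsto_of_le_of_le' hlo hhi
  · exact eventually_nhdsWithin_of_forall (fun t ht => (phi_bounds ht).1)
  · exact eventually_nhdsWithin_of_forall (fun t ht => (phi_bounds ht).2)

lemma phi_eq_one {t : ℝ} (ht : t ∈ Set.Ioo (0:ℝ) 1) : phi t = 1 := by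
  have hne : (nhdsWithin (0:ℝ) (Set.Ioo (0:ℝ) 1)).NeBot := by
    apply mem_closure_iff_nhdsWithin_neBot.mp
    rw [closure_Ioo (zero_ne_one)]
    exact ⟨le_refl 0, zero_le_one⟩
  have hconst : Filter.Tendsto phi (nhdsWithin 0 (Set.Ioo (0:ℝ) 1)) (nhds (phi t)) := by
    rw [Filter.tendsto_congr' (f₁ := phi) (f₂ := fun _ => phi t)]
    · exact tendsto_const_nhds
    · apply eventually_nhdsWithin_of_forall
      intro s hs
      rcases le_total s t with h | h
      · exact (phi_constant hs ht h).symm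
      · exact phi_constant ht hs h
  exact tendsto_nhds_unique hconst tendsto_phi

lemma Ufun_eq {t : ℝ} (ht : t ∈ Set.Ioo (0:ℝ) 1) : Ufun t = t := by
  obtain ⟨ht0, ht1⟩ := ht
  have hphi := phi_eq_one ⟨ht0, ht1⟩
  rw [phi] at hphi
  have hkey : Ufun t * Real.exp (-(Ufun t)) = t * Real.exp (-t) := by
    rw [Real.exp_neg t]
    have hexp : Real.exp t ≠ 0 := (Real.exp_pos t).ne'
    field_simp at hphi ⊢
    linarith
  have h1 : Ufun t ∈ Set.Icc (0:ℝ) 1 :=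
    ⟨Ufun_nonneg ht0.le, (Ufun_lt_one ⟨ht0, ht1⟩).le⟩
  have h2 : t ∈ Set.Icc (0:ℝ) 1 := ⟨ht0.le, ht1.le⟩
  exact psi_strictMonoOn.injOn h1 h2 hkey

lemma Bfun_eq {t : ℝ} (ht : t ∈ Set.Ioo (0:ℝ) 1) : Bfun t = t / (1 - t) := by
  have h := one_sub_U_mul_B ht
  rw [Ufun_eq ht] at h
  have h1t : (1:ℝ) - t ≠ 0 := by
    have := ht.2; intro hc; rw [sub_eq_zero] at hc; linarith
  field_simp
  linarith

theorem stmt18 (lam : ℝ) (hlam : lam ∈ Set.Ioo (0 : ℝ) 1) :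
    ∑' n : ℕ, (n : ℝ) * ((lam * n) ^ (n - 1) / n.factorial * Real.exp (-(lam * n)))
    = 1 / (1 - lam) := by
  obtain ⟨h0, h1⟩ := hlam
  have hB : Bfun lam = lam / (1 - lam) := Bfun_eq ⟨h0, h1⟩
  have hterm : ∀ n : ℕ, (n : ℝ) * ((lam * n) ^ (n - 1) / n.factorial * Real.exp (-(lam * n)))
      = lam⁻¹ * (borelB n * (lam * Real.exp (-lam)) ^ n) := by
    intro n
    match n with
    | 0 => simp [borelB]
    | (m + 1) =>
      rw [borelB, if_neg (Nat.succ_ne_zero m)]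
      have hexp : Real.exp (-(lam * ((m + 1 : ℕ) : ℝ))) = Real.exp (-lam) ^ (m + 1) := by
        rw [show -(lam * ((m + 1 : ℕ) : ℝ)) = ((m + 1 : ℕ) : ℝ) * (-lam) from by push_cast; ring,
          Real.exp_nat_mul]
      rw [hexp]
      have hfact : ((m + 1).factorial : ℝ) ≠ 0 :=
        Nat.cast_ne_zero.mpr (Nat.factorial_ne_zero _)
      rw [show (m + 1 : ℕ) - 1 = m from rfl]
      push_cast
      rw [mul_pow]
      field_simp
      ring
  rw [tsum_congr hterm, tsum_mul_left]
  show lam⁻¹ * Bfun lam = 1 / (1 - lam)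
  rw [hB]
  field_simp
end

section
/- For k ∈ ℤ, θ > 0, λ ∈ (0,1), and m ≥ 1, the moments of the distribution p_k(θ,λ;n) = S(k,θ,λ)^{-1}·(θ+λn)^{n+k-1}/n!·e^{-(θ+λn)} satisfy E[(X_k(θ,λ))^m] = (S(k+1,θ+λ,λ)/S(k,θ,λ)) · ∑_{ℓ=0}^{m-1} C(m-1,ℓ)·E[(X_{k+1}(θ+λ,λ))^ℓ], assuming all series converge absolutely. -/
/-- The normalizing constants `S(k,θ,λ)` of Consul and Jain. -/
noncomputable def consulJainS (k : ℤ) (θ lam : ℝ) : ℝ :=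
  ∑' n : ℕ, (θ + lam * n) ^ ((n : ℤ) + k - 1) / n.factorial * Real.exp (-(θ + lam * n))

/-- The `j`-th moment of the random variable `X_k(θ,λ)` with distribution
`p_k(θ,λ;n) = S(k,θ,λ)⁻¹ (θ+λn)^{n+k-1}/n! e^{-(θ+λn)}`. -/
noncomputable def momentX (j : ℕ) (k : ℤ) (θ lam : ℝ) : ℝ :=
  ∑' n : ℕ, (n : ℝ) ^ j * ((consulJainS k θ lam)⁻¹ *
    (θ + lam * n) ^ ((n : ℤ) + k - 1) / n.factorial * Real.exp (-(θ + lam * n)))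

theorem stmt19 (θ lam : ℝ) (hθ : 0 < θ) (hlam : lam ∈ Set.Ioo (0 : ℝ) 1) (k : ℤ)
    (m : ℕ) (hm : 1 ≤ m)
    (hs1 : ∀ j ≤ m, Summable fun n : ℕ => (n : ℝ) ^ j *
      ((θ + lam * n) ^ ((n : ℤ) + k - 1) / n.factorial * Real.exp (-(θ + lam * n))))
    (hs2 : ∀ j ≤ m, Summable fun n : ℕ => (n : ℝ) ^ j *
      (((θ + lam) + lam * n) ^ ((n : ℤ) + (k + 1) - 1) / n.factorial *
        Real.exp (-((θ + lam) + lam * n)))) :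
    momentX m k θ lam
    = consulJainS (k + 1) (θ + lam) lam / consulJainS k θ lam *
        ∑ ℓ ∈ Finset.range m, (Nat.choose (m - 1) ℓ : ℝ) * momentX ℓ (k + 1) (θ + lam) lam := by
  obtain ⟨hl0, hl1⟩ := hlam
  have hθl : 0 < θ + lam := by linarith
  have hnum : ∀ n : ℕ, 0 < (θ + lam * n) ^ ((n : ℤ) + k - 1) / n.factorial *
      Real.exp (-(θ + lam * n)) := by
    intro n
    have h1 : 0 < θ + lam * n := by positivity
    have h2 : (0:ℝ) < n.factorial := by positivity
    positivity
  have hnum' : ∀ n : ℕ, 0 < ((θ + lam) + lam * n) ^ ((n : ℤ) + (k + 1) - 1) / n.factorial *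
      Real.exp (-((θ + lam) + lam * n)) := by
    intro n
    have h1 : 0 < (θ + lam) + lam * n := by positivity
    have h2 : (0:ℝ) < n.factorial := by positivity
    positivity
  have hSA : Summable (fun n : ℕ => (θ + lam * n) ^ ((n : ℤ) + k - 1) / n.factorial *
      Real.exp (-(θ + lam * n))) := by simpa using hs1 0 (Nat.zero_le m)
  have hSB : Summable (fun n : ℕ => ((θ + lam) + lam * n) ^ ((n : ℤ) + (k + 1) - 1) / n.factorial *
      Real.exp (-((θ + lam) + lam * n))) := by simpa using hs2 0 (Nat.zero_le m)
  have hApos : 0 < consulJainS k θ lam :=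
    Summable.tsum_pos hSA (fun n => (hnum n).le) 0 (hnum 0)
  have hBpos : 0 < consulJainS (k + 1) (θ + lam) lam :=
    Summable.tsum_pos hSB (fun n => (hnum' n).le) 0 (hnum' 0)
  -- moments in factored form
  have hmomA : momentX m k θ lam = (consulJainS k θ lam)⁻¹ *
      ∑' n : ℕ, (n : ℝ) ^ m * ((θ + lam * n) ^ ((n : ℤ) + k - 1) / n.factorial *
        Real.exp (-(θ + lam * n))) := by
    rw [momentX, ← tsum_mul_left]
    congr 1; ext n; ring
  have hmomB : ∀ ℓ : ℕ, momentX ℓ (k + 1) (θ + lam) lam =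
      (consulJainS (k + 1) (θ + lam) lam)⁻¹ *
      ∑' n : ℕ, (n : ℝ) ^ ℓ * (((θ + lam) + lam * n) ^ ((n : ℤ) + (k + 1) - 1) / n.factorial *
        Real.exp (-((θ + lam) + lam * n))) := by
    intro ℓ
    rw [momentX, ← tsum_mul_left]
    congr 1; ext n; ring
  have hTB : ∀ ℓ : ℕ,
      (∑' n : ℕ, (n : ℝ) ^ ℓ * (((θ + lam) + lam * n) ^ ((n : ℤ) + (k + 1) - 1) / n.factorial *
        Real.exp (-((θ + lam) + lam * n))))
      = consulJainS (k + 1) (θ + lam) lam * momentX ℓ (k + 1) (θ + lam) lam := by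
    intro ℓ
    rw [hmomB ℓ, ← mul_assoc, mul_inv_cancel₀ hBpos.ne', one_mul]
  -- key pointwise identity
  have hpoint : ∀ j : ℕ,
      ((j : ℝ) + 1) ^ m * ((θ + lam * (j + 1 : ℕ)) ^ (((j + 1 : ℕ) : ℤ) + k - 1) /
        (j + 1 : ℕ).factorial * Real.exp (-(θ + lam * (j + 1 : ℕ))))
      = ∑ ℓ ∈ Finset.range m, (Nat.choose (m - 1) ℓ : ℝ) *
          ((j : ℝ) ^ ℓ * (((θ + lam) + lam * j) ^ ((j : ℤ) + (k + 1) - 1) / j.factorial *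
            Real.exp (-((θ + lam) + lam * j)))) := by
    intro j
    have hbase : θ + lam * ((j : ℝ) + 1) = (θ + lam) + lam * j := by ring
    have hexp1 : ((j : ℤ) + 1 + k - 1) = (j : ℤ) + k := by ring
    have hexp2 : ((j : ℤ) + (k + 1) - 1) = (j : ℤ) + k := by ring
    have hfact : ((j + 1 : ℕ).factorial : ℝ) = ((j : ℝ) + 1) * j.factorial := by
      rw [Nat.factorial_succ]; push_cast; ring
    have hjpos : (0:ℝ) < (j:ℝ) + 1 := by positivity
    have hbin : ((j : ℝ) + 1) ^ (m - 1) = ∑ ℓ ∈ Finset.range m, (Nat.choose (m - 1) ℓ : ℝ) * (j : ℝ) ^ ℓ := by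
      have := add_pow (j : ℝ) 1 (m - 1)
      rw [Nat.sub_add_cancel hm] at this
      rw [this]
      refine Finset.sum_congr rfl fun ℓ _ => ?_
      rw [one_pow]; ring
    push_cast
    rw [hbase, hexp1, hexp2, hfact]
    have hpm : ((j : ℝ) + 1) ^ m = ((j : ℝ) + 1) * ((j : ℝ) + 1) ^ (m - 1) := by
      conv_lhs => rw [← Nat.sub_add_cancel hm]
      rw [pow_succ]; ring
    rw [hpm, hbin, mul_assoc, Finset.sum_mul, Finset.mul_sum]
    refine Finset.sum_congr rfl fun ℓ _ => ?_
    have hne : ((j:ℝ) + 1) ≠ 0 := hjpos.ne'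
    field_simp
  -- the main sum computation
  have hT : (∑' n : ℕ, (n : ℝ) ^ m * ((θ + lam * n) ^ ((n : ℤ) + k - 1) / n.factorial *
      Real.exp (-(θ + lam * n))))
      = ∑ ℓ ∈ Finset.range m, (Nat.choose (m - 1) ℓ : ℝ) *
          (consulJainS (k + 1) (θ + lam) lam * momentX ℓ (k + 1) (θ + lam) lam) := by
    rw [Summable.tsum_eq_zero_add (hs1 m le_rfl)]
    have h0 : ((0 : ℕ) : ℝ) ^ m * ((θ + lam * (0:ℕ)) ^ (((0:ℕ) : ℤ) + k - 1) / (0:ℕ).factorial *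
        Real.exp (-(θ + lam * (0:ℕ)))) = 0 := by
      simp [zero_pow (by omega : m ≠ 0)]
    rw [h0, zero_add]
    have hshift : (∑' j : ℕ, ((j + 1 : ℕ) : ℝ) ^ m *
        ((θ + lam * (j + 1 : ℕ)) ^ (((j + 1 : ℕ) : ℤ) + k - 1) / (j + 1 : ℕ).factorial *
          Real.exp (-(θ + lam * (j + 1 : ℕ)))))
        = ∑' j : ℕ, ∑ ℓ ∈ Finset.range m, (Nat.choose (m - 1) ℓ : ℝ) *
          ((j : ℝ) ^ ℓ * (((θ + lam) + lam * j) ^ ((j : ℤ) + (k + 1) - 1) / j.factorial *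
            Real.exp (-((θ + lam) + lam * j)))) := by
      congr 1; ext j
      have := hpoint j
      push_cast at this ⊢
      exact this
    rw [hshift, Summable.tsum_finsetSum (fun ℓ hℓ => ((hs2 ℓ (le_of_lt (Finset.mem_range.mp hℓ))).mul_left _))]
    refine Finset.sum_congr rfl fun ℓ _ => ?_
    rw [tsum_mul_left, hTB ℓ]
  rw [hmomA, hT, Finset.mul_sum, Finset.mul_sum]
  refine Finset.sum_congr rfl fun ℓ _ => ?_
  field_simp
end
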